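/- arXiv:1410.1014 — 7 statements merged into one kernel-verified Lean document; each statement's English description precedes it below -/
import Mathlib

section
/- Let m be a natural number, r > 0, and let f and g be analytic functions on the punctured disc Δ_r \ {0}. Suppose there exist s ∈ (0, min(r,1)) and an analytic function V on Δ_s × Δ_s ⊆ ℂ² such that for all (z₁,z₂) with 0<|z₁|<s and |z₂|<s one has 0 < |z₁·(1+z₁^m·z₂)| < r and f(z₁) + g(z₁·(1+z₁^m·z₂)) = V(z₁,z₂). Then the functions z ↦ z^m·f(z) and z ↦ z^m·g(z), defined on Δ_r \ {0}, extend analytically across 0; that is, f and g are meromorphic at 0 with poles of order at most m. -/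
open Complex Metric Set Filter Function
open scoped Topology


/-- Gluing: an analytic extension of `z^m φ z` on a small ball glues with
`z^m φ z` on the punctured disc of radius `r`. -/
lemma glue_aux (m : ℕ) (r b : ℝ) (hb : 0 < b) (hbr : b ≤ r) (φ : ℂ → ℂ)
    (hφ : AnalyticOnNhd ℂ φ {z : ℂ | 0 < ‖z‖ ∧ ‖z‖ < r})
    (F₀ : ℂ → ℂ) (hF₀ : AnalyticOnNhd ℂ F₀ (Metric.ball (0:ℂ) b))
    (heq : ∀ z : ℂ, z ≠ 0 → ‖z‖ < b → F₀ z = z ^ m * φ z) :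
    ∃ F : ℂ → ℂ, AnalyticOnNhd ℂ F {z : ℂ | ‖z‖ < r} ∧
      ∀ z : ℂ, 0 < ‖z‖ → ‖z‖ < r → F z = z ^ m * φ z := by
  refine ⟨fun z => if z = 0 then F₀ 0 else z ^ m * φ z, ?_, ?_⟩
  · intro z hz
    rcases eq_or_ne z 0 with rfl | hz0
    · have h0 : AnalyticAt ℂ F₀ 0 := hF₀ 0 (by simpa using hb)
      refine h0.congr ?_
      have : Metric.ball (0:ℂ) b ∈ 𝓝 (0:ℂ) := Metric.ball_mem_nhds _ hb
      filter_upwards [this] with w hw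
      rcases eq_or_ne w 0 with rfl | hw0
      · simp
      · simp only [if_neg hw0]
        exact heq w hw0 (by simpa using hw)
    · have h1 : AnalyticAt ℂ (fun w : ℂ => w ^ m * φ w) z := by
        refine (analyticAt_id.pow m).mul (hφ z ?_)
        exact ⟨by simpa [norm_pos_iff] using hz0, hz⟩
      refine h1.congr ?_
      filter_upwards [isOpen_compl_singleton.mem_nhds hz0] with w hw
      have hw' : w ≠ 0 := hw
      simp [if_neg hw']
  · intro z hz _
    have hz0 : z ≠ 0 := by
      intro h; rw [h] at hz; simp at hz
    simp [if_neg hz0]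

lemma deriv_bound (m : ℕ) (r s : ℝ) (hs0 : 0 < s) (hsr : s < r)
    (f g : ℂ → ℂ)
    (hg : AnalyticOnNhd ℂ g {z : ℂ | 0 < ‖z‖ ∧ ‖z‖ < r})
    (V : ℂ × ℂ → ℂ)
    (hV : AnalyticOnNhd ℂ V {p : ℂ × ℂ | ‖p.1‖ < s ∧ ‖p.2‖ < s})
    (hrel : ∀ z₁ z₂ : ℂ, 0 < ‖z₁‖ → ‖z₁‖ < s → ‖z₂‖ < s →
      f z₁ + g (z₁ * (1 + z₁ ^ m * z₂)) = V (z₁, z₂)) :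
    ∃ C : ℝ, 0 ≤ C ∧ ∀ z₁ : ℂ, 0 < ‖z₁‖ → ‖z₁‖ ≤ s / 2 →
      ‖deriv g z₁‖ * (‖z₁‖) ^ (m + 1) ≤ C := by
  have ht : (0:ℝ) < s / 2 := half_pos hs0
  set K : Set (ℂ × ℂ) := closedBall (0:ℂ) (s/2) ×ˢ closedBall (0:ℂ) (s/2) with hKdef
  have hK : IsCompact K := (isCompact_closedBall _ _).prod (isCompact_closedBall _ _)
  have hKsub : K ⊆ {p : ℂ × ℂ | ‖p.1‖ < s ∧ ‖p.2‖ < s} := by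
    rintro ⟨p1, p2⟩ ⟨h1, h2⟩
    simp only [mem_closedBall, dist_zero_right] at h1 h2
    exact ⟨lt_of_le_of_lt h1 (half_lt_self hs0), lt_of_le_of_lt h2 (half_lt_self hs0)⟩
  obtain ⟨M, hM⟩ := hK.exists_bound_of_continuousOn (hV.continuousOn.mono hKsub)
  have hM0 : 0 ≤ M := le_trans (norm_nonneg _) (hM (0,0) (by simp [hKdef, ht.le]))
  refine ⟨M / (s/2), div_nonneg hM0 ht.le, ?_⟩
  intro z₁ h0 h1
  have h1s : ‖z₁‖ < s := lt_of_le_of_lt h1 (half_lt_self hs0)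
  have h1r : ‖z₁‖ < r := lt_trans h1s hsr
  -- the slice function w ↦ V (z₁, w)
  have hd2 : DifferentiableOn ℂ (fun w => V (z₁, w)) (closedBall (0:ℂ) (s/2)) := by
    intro w hw
    simp only [mem_closedBall, dist_zero_right] at hw
    have : DifferentiableAt ℂ (fun w => V (z₁, w)) w := by
      have hVd : DifferentiableAt ℂ V (z₁, w) :=
        (hV (z₁, w) ⟨h1s, lt_of_le_of_lt hw (half_lt_self hs0)⟩).differentiableAt
      exact hVd.comp w ((differentiableAt_const z₁).prodMk differentiableAt_id)
    exact this.differentiableWithinAt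
  have hD : DiffContOnCl ℂ (fun w => V (z₁, w)) (ball (0:ℂ) (s/2)) := by
    apply DifferentiableOn.diffContOnCl
    rwa [closure_ball (0:ℂ) ht.ne']
  have hsb : ∀ w ∈ sphere (0:ℂ) (s/2), ‖V (z₁, w)‖ ≤ M := by
    intro w hw
    simp only [mem_sphere_iff_norm, sub_zero] at hw
    exact hM (z₁, w) ⟨by simpa using h1, by simp [hw]⟩
  have hcd : ‖deriv (fun w => V (z₁, w)) 0‖ ≤ M / (s/2) :=
    Complex.norm_deriv_le_of_forall_mem_sphere_norm_le ht hD hsb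
  -- the composition φ
  have heq : (fun w => g (z₁ + z₁ ^ (m+1) * w)) =ᶠ[𝓝 (0:ℂ)]
      fun w => V (z₁, w) - f z₁ := by
    filter_upwards [ball_mem_nhds (0:ℂ) hs0] with w hw
    have hw' : ‖w‖ < s := by simpa [dist_zero_right] using hw
    have h := hrel z₁ w h0 h1s hw'
    have harg : z₁ * (1 + z₁ ^ m * w) = z₁ + z₁ ^ (m+1) * w := by ring
    rw [harg] at h
    linear_combination h
  have hga : AnalyticAt ℂ g z₁ := hg z₁ ⟨h0, h1r⟩
  have hgd : HasDerivAt g (deriv g z₁) z₁ := hga.differentiableAt.hasDerivAt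
  have inner : HasDerivAt (fun w : ℂ => z₁ + z₁ ^ (m+1) * w) (z₁ ^ (m+1)) 0 := by
    simpa using ((hasDerivAt_id (0:ℂ)).const_mul (z₁^(m+1))).const_add z₁
  have h2 : HasDerivAt (fun w => g (z₁ + z₁ ^ (m+1) * w)) (deriv g z₁ * z₁ ^ (m+1)) 0 :=
    HasDerivAt.comp 0 (by simpa using hgd) inner
  have e2 : deriv (fun w => g (z₁ + z₁ ^ (m+1) * w)) 0
      = deriv (fun w => V (z₁, w) - f z₁) 0 := heq.deriv_eq
  have e3 : deriv (fun w => V (z₁, w) - f z₁) 0 = deriv (fun w => V (z₁, w)) 0 := by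
    simp [deriv_sub_const]
  have : ‖deriv g z₁ * z₁ ^ (m+1)‖ ≤ M / (s/2) := by
    rw [← h2.deriv, e2, e3]; exact hcd
  calc ‖deriv g z₁‖ * (‖z₁‖) ^ (m+1)
      = ‖deriv g z₁ * z₁ ^ (m+1)‖ := by
        simp [norm_mul, map_pow]
    _ ≤ M / (s/2) := this

lemma tendsto_aux (m : ℕ) (r t : ℝ) (ht : 0 < t) (htr : t < r) (g : ℂ → ℂ)
    (hg : AnalyticOnNhd ℂ g {z : ℂ | 0 < ‖z‖ ∧ ‖z‖ < r})
    (C : ℝ) (hC : 0 ≤ C)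
    (hd : ∀ z : ℂ, 0 < ‖z‖ → ‖z‖ ≤ t →
      ‖deriv g z‖ * (‖z‖) ^ (m + 1) ≤ C) :
    Tendsto (fun z : ℂ => z ^ (m + 1) * g z) (𝓝[≠] (0:ℂ)) (𝓝 0) := by
  set b : ℝ := t / 2 with hbdef
  have hb : 0 < b := half_pos ht
  have hbt : b < t := half_lt_self ht
  have hbr : b < r := lt_trans hbt htr
  -- bound for g on the sphere of radius b
  have hsub : sphere (0:ℂ) b ⊆ {z : ℂ | 0 < ‖z‖ ∧ ‖z‖ < r} := by
    intro z hz
    simp only [mem_sphere_iff_norm, sub_zero] at hz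
    exact ⟨by rw [hz]; exact hb, by rw [hz]; exact hbr⟩
  obtain ⟨K₀, hK₀⟩ := (isCompact_sphere (0:ℂ) b).exists_bound_of_continuousOn
    (hg.continuousOn.mono hsub)
  set K : ℝ := max K₀ 0 with hKdef
  have hK : ∀ z ∈ sphere (0:ℂ) b, ‖g z‖ ≤ K := fun z hz => (hK₀ z hz).trans (le_max_left _ _)
  have hKnn : 0 ≤ K := le_max_right _ _
  -- main pointwise estimate
  have main : ∀ z : ℂ, 0 < ‖z‖ → ‖z‖ < b →
      ‖g z‖ ≤ K + C * (‖z‖) ^ (-(m:ℝ) - 1/2) * (2 * Real.sqrt b) := by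
    intro z h0 h1
    set a : ℝ := ‖z‖ with hadef
    have ha : 0 < a := h0
    have hab : a < b := h1
    set u : ℂ := z / (a:ℂ) with hudef
    have hu : ‖u‖ = 1 := by
      rw [hudef, norm_div, Complex.norm_real, Real.norm_eq_abs, abs_of_pos ha]; exact div_self ha.ne'
    have hmem : ∀ ρ : ℝ, a ≤ ρ → ρ ≤ b → ‖(ρ:ℂ) * u‖ = ρ := by
      intro ρ hρ1 hρ2
      rw [norm_mul, hu, mul_one, Complex.norm_real, Real.norm_eq_abs, abs_of_pos (lt_of_lt_of_le ha hρ1)]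
    have hmem' : ∀ ρ : ℝ, a ≤ ρ → ρ ≤ b →
        (ρ:ℂ) * u ∈ {z : ℂ | 0 < ‖z‖ ∧ ‖z‖ < r} := by
      intro ρ hρ1 hρ2
      rw [Set.mem_setOf_eq, hmem ρ hρ1 hρ2]
      exact ⟨lt_of_lt_of_le ha hρ1, lt_of_le_of_lt hρ2 hbr⟩
    -- FTC along the ray
    have hderiv : ∀ ρ ∈ Set.uIcc a b,
        HasDerivAt (fun ρ : ℝ => g ((ρ:ℂ) * u)) (deriv g ((ρ:ℂ) * u) * u) ρ := by
      intro ρ hρ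
      rw [Set.uIcc_of_le hab.le] at hρ
      have hga : AnalyticAt ℂ g ((ρ:ℂ) * u) := hg _ (hmem' ρ hρ.1 hρ.2)
      have hinner : HasDerivAt (fun w : ℂ => w * u) u (ρ:ℂ) := by
        simpa using (hasDerivAt_id ((ρ:ℂ))).mul_const u
      have : HasDerivAt (fun w : ℂ => g (w * u)) (deriv g ((ρ:ℂ) * u) * u) (ρ:ℂ) :=
        HasDerivAt.comp _ hga.differentiableAt.hasDerivAt hinner
      exact this.comp_ofReal
    have hcont : ContinuousOn (fun ρ : ℝ => deriv g ((ρ:ℂ) * u) * u) (Set.uIcc a b) := by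
      rw [Set.uIcc_of_le hab.le]
      have h1 : ContinuousOn (fun ρ : ℝ => (ρ:ℂ) * u) (Set.Icc a b) :=
        (Complex.continuous_ofReal.mul continuous_const).continuousOn
      have h2 : ContinuousOn (deriv g) {z : ℂ | 0 < ‖z‖ ∧ ‖z‖ < r} :=
        hg.deriv.continuousOn
      exact (h2.comp h1 (fun ρ hρ => hmem' ρ hρ.1 hρ.2)).mul continuousOn_const
    have hint : IntervalIntegrable (fun ρ : ℝ => deriv g ((ρ:ℂ) * u) * u)
        MeasureTheory.volume a b := hcont.intervalIntegrable
    have hFTC : ∫ ρ in a..b, deriv g ((ρ:ℂ) * u) * u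
        = g ((b:ℂ) * u) - g ((a:ℂ) * u) :=
      intervalIntegral.integral_eq_sub_of_hasDerivAt hderiv hint
    -- bound the integrand
    have hbnd : ∀ ρ ∈ Set.Ioc a b,
        ‖deriv g ((ρ:ℂ) * u) * u‖ ≤ C * a ^ (-(m:ℝ) - 1/2) * ρ ^ (-(1:ℝ)/2) := by
      intro ρ hρ
      have hρ0 : 0 < ρ := lt_trans ha hρ.1
      have habs : ‖(ρ:ℂ) * u‖ = ρ := hmem ρ hρ.1.le hρ.2
      have hd1 : ‖deriv g ((ρ:ℂ) * u)‖ * ρ ^ (m+1) ≤ C := by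
        have := hd ((ρ:ℂ) * u) (by rw [habs]; exact hρ0)
          (by rw [habs]; exact hρ.2.trans hbt.le)
        rwa [habs] at this
      have hd2 : ‖deriv g ((ρ:ℂ) * u)‖ ≤ C * (ρ ^ (m+1))⁻¹ := by
        rw [← div_eq_mul_inv, le_div_iff₀ (by positivity)]
        exact hd1
      have key : ((ρ:ℝ)^(m+1))⁻¹ ≤ a ^ (-(m:ℝ) - 1/2) * ρ ^ (-(1:ℝ)/2) := by
        have hmono : a ^ ((m:ℝ) + 1/2) ≤ ρ ^ ((m:ℝ) + 1/2) :=
          Real.rpow_le_rpow ha.le hρ.1.le (by positivity)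
        have h2 : (ρ:ℝ)^(m+1) = ρ ^ ((m:ℝ) + 1/2) * ρ ^ ((1:ℝ)/2) := by
          rw [← Real.rpow_add hρ0, ← Real.rpow_natCast ρ (m+1)]
          push_cast
          ring_nf
        have h3 : a ^ (-(m:ℝ) - 1/2) = (a ^ ((m:ℝ) + 1/2))⁻¹ := by
          rw [← Real.rpow_neg ha.le]; ring_nf
        have h4 : ρ ^ (-(1:ℝ)/2) = (ρ ^ ((1:ℝ)/2))⁻¹ := by
          rw [← Real.rpow_neg hρ0.le]; ring_nf
        rw [h2, h3, h4, mul_inv]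
        apply mul_le_mul_of_nonneg_right
        · exact inv_anti₀ (Real.rpow_pos_of_pos ha _) hmono
        · positivity
      calc ‖deriv g ((ρ:ℂ) * u) * u‖ = ‖deriv g ((ρ:ℂ) * u)‖ := by
            rw [norm_mul]; simp [hu]
        _ ≤ C * (ρ ^ (m+1))⁻¹ := hd2
        _ ≤ C * (a ^ (-(m:ℝ) - 1/2) * ρ ^ (-(1:ℝ)/2)) := mul_le_mul_of_nonneg_left key hC
        _ = C * a ^ (-(m:ℝ) - 1/2) * ρ ^ (-(1:ℝ)/2) := (mul_assoc _ _ _).symm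
    -- integrate the bound
    have hbint : IntervalIntegrable (fun ρ : ℝ => C * a ^ (-(m:ℝ) - 1/2) * ρ ^ (-(1:ℝ)/2))
        MeasureTheory.volume a b := by
      apply ContinuousOn.intervalIntegrable
      apply continuousOn_const.mul
      intro ρ hρ
      rw [Set.uIcc_of_le hab.le] at hρ
      exact (Real.continuousAt_rpow_const ρ _
        (Or.inl (ne_of_gt (lt_of_lt_of_le ha hρ.1)))).continuousWithinAt
    have hIval : ∫ ρ in a..b, ρ ^ (-(1:ℝ)/2) = (b ^ (-(1:ℝ)/2 + 1) - a ^ (-(1:ℝ)/2 + 1)) / (-(1:ℝ)/2 + 1) :=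
      integral_rpow (Or.inl (by norm_num))
    have hIle : |∫ ρ in a..b, C * a ^ (-(m:ℝ) - 1/2) * ρ ^ (-(1:ℝ)/2)|
        ≤ C * a ^ (-(m:ℝ) - 1/2) * (2 * Real.sqrt b) := by
      rw [intervalIntegral.integral_const_mul, hIval]
      have hmono : a ^ (-(1:ℝ)/2 + 1) ≤ b ^ (-(1:ℝ)/2 + 1) :=
        Real.rpow_le_rpow ha.le hab.le (by norm_num)
      have hb12 : b ^ (-(1:ℝ)/2 + 1) = Real.sqrt b := by
        rw [Real.sqrt_eq_rpow]; norm_num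
      rw [abs_mul]
      have h5 : |C * a ^ (-(m:ℝ) - 1/2)| = C * a ^ (-(m:ℝ) - 1/2) := by
        apply _root_.abs_of_nonneg; positivity
      rw [h5]
      apply mul_le_mul_of_nonneg_left _ (by positivity)
      rw [_root_.abs_of_nonneg (by linarith [div_nonneg (sub_nonneg.mpr hmono) (by norm_num : (0:ℝ) ≤ -(1:ℝ)/2+1)])]
      have ha12 : 0 ≤ a ^ (-(1:ℝ)/2 + 1) := Real.rpow_nonneg ha.le _
      rw [div_le_iff₀ (by norm_num)]
      rw [hb12] at hmono ⊢
      nlinarith [Real.sqrt_nonneg b]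
    have hnorm : ‖∫ ρ in a..b, deriv g ((ρ:ℂ) * u) * u‖
        ≤ C * a ^ (-(m:ℝ) - 1/2) * (2 * Real.sqrt b) := by
      refine le_trans (intervalIntegral.norm_integral_le_of_norm_le hab.le ?_ hbint) ((le_abs_self _).trans hIle)
      exact MeasureTheory.ae_of_all _ fun ρ hρ => hbnd ρ hρ
    have hz_eq : ((a:ℝ):ℂ) * u = z := by
      have hane : ((a:ℝ):ℂ) ≠ 0 := Complex.ofReal_ne_zero.mpr ha.ne'
      rw [hudef, mul_comm, div_mul_eq_mul_div, mul_div_assoc, div_self hane, mul_one]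
    have hgb : ‖g (((b:ℝ):ℂ) * u)‖ ≤ K := by
      apply hK
      rw [mem_sphere_iff_norm, sub_zero, hmem b hab.le le_rfl]
    have hdiff : ‖g (((b:ℝ):ℂ) * u) - g z‖ ≤ C * a ^ (-(m:ℝ) - 1/2) * (2 * Real.sqrt b) := by
      rw [← hz_eq, ← hFTC]
      exact hnorm
    calc ‖g z‖ = ‖g (((b:ℝ):ℂ) * u) - (g (((b:ℝ):ℂ) * u) - g z)‖ := by ring_nf
      _ ≤ ‖g (((b:ℝ):ℂ) * u)‖ + ‖g (((b:ℝ):ℂ) * u) - g z‖ := norm_sub_le _ _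
      _ ≤ K + C * (‖z‖) ^ (-(m:ℝ) - 1/2) * (2 * Real.sqrt b) := by
          exact add_le_add hgb hdiff
  -- conclude the limit
  have habs0 : Tendsto (fun z : ℂ => ‖z‖) (𝓝[≠] (0:ℂ)) (𝓝 0) := by
    simpa using ((continuous_norm (E := ℂ)).tendsto 0).mono_left nhdsWithin_le_nhds
  have hreal : Tendsto (fun x : ℝ => x ^ (m+1) * K + C * x ^ ((1:ℝ)/2) * (2 * Real.sqrt b))
      (𝓝 (0:ℝ)) (𝓝 0) := by
    have h1 : ContinuousAt (fun x : ℝ => x ^ (m+1) * K + C * x ^ ((1:ℝ)/2) * (2 * Real.sqrt b)) 0 := by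
      apply ContinuousAt.add
      · exact ((continuous_pow _).continuousAt).mul continuousAt_const
      · exact (continuousAt_const.mul
          (Real.continuousAt_rpow_const 0 _ (Or.inr (by norm_num)))).mul continuousAt_const
    have h2 := h1.tendsto
    simpa [Real.zero_rpow (by norm_num : ((1:ℝ)/2) ≠ 0)] using h2
  have hcomp := hreal.comp habs0
  refine squeeze_zero_norm' ?_ hcomp
  · simp only [Function.comp_def]
    filter_upwards [mem_nhdsWithin_of_mem_nhds (Metric.ball_mem_nhds (0:ℂ) hb),
      self_mem_nhdsWithin] with z hz1 hz2
    have hz1' : ‖z‖ < b := by simpa using hz1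
    have hz0 : 0 < ‖z‖ := by
      simpa [norm_pos_iff] using hz2
    have hm := main z hz0 hz1'
    have hpow : (‖z‖) ^ (m+1) * (‖z‖) ^ (-(m:ℝ) - 1/2)
        = (‖z‖) ^ ((1:ℝ)/2) := by
      rw [← Real.rpow_natCast (‖z‖) (m+1), ← Real.rpow_add hz0]
      push_cast
      ring_nf
    calc ‖z ^ (m+1) * g z‖ = (‖z‖) ^ (m+1) * ‖g z‖ := by
          rw [norm_mul, norm_pow]
      _ ≤ (‖z‖) ^ (m+1) * (K + C * (‖z‖) ^ (-(m:ℝ) - 1/2) * (2 * Real.sqrt b)) :=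
          mul_le_mul_of_nonneg_left hm (by positivity)
      _ = (‖z‖) ^ (m+1) * K + C * ((‖z‖) ^ (m+1) * (‖z‖) ^ (-(m:ℝ) - 1/2)) * (2 * Real.sqrt b) := by ring
      _ = (‖z‖) ^ (m+1) * K + C * (‖z‖) ^ ((1:ℝ)/2) * (2 * Real.sqrt b) := by rw [hpow]

lemma ext_aux (m : ℕ) (r b : ℝ) (hb : 0 < b) (hbr : b ≤ r) (g : ℂ → ℂ)
    (hg : AnalyticOnNhd ℂ g {z : ℂ | 0 < ‖z‖ ∧ ‖z‖ < r})
    (htend : Tendsto (fun z : ℂ => z ^ (m + 1) * g z) (𝓝[≠] (0:ℂ)) (𝓝 0)) :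
    ∃ F₀ : ℂ → ℂ, AnalyticOnNhd ℂ F₀ (Metric.ball (0:ℂ) b) ∧
      ∀ z : ℂ, z ≠ 0 → ‖z‖ < b → F₀ z = z ^ m * g z := by
  set F : ℂ → ℂ := fun z => z ^ m * g z with hFdef
  have ho : (fun z => F z - F 0) =o[𝓝[≠] (0:ℂ)] fun z => (z - 0)⁻¹ := by
    rw [Asymptotics.isLittleO_iff]
    intro ε hε
    have h1 : ∀ᶠ z in 𝓝[≠] (0:ℂ), ‖z ^ (m+1) * g z‖ ≤ ε/2 := by
      filter_upwards [htend (Metric.closedBall_mem_nhds (0:ℂ) (half_pos hε))] with z hz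
      simpa [dist_eq_norm] using hz
    have h2 : ∀ᶠ z in 𝓝[≠] (0:ℂ), ‖z‖ * ‖F 0‖ ≤ ε/2 := by
      have T : Tendsto (fun z : ℂ => ‖z‖ * ‖F 0‖) (𝓝[≠] (0:ℂ)) (𝓝 (‖(0:ℂ)‖ * ‖F 0‖)) :=
        ((continuous_norm.tendsto (0:ℂ)).mono_left nhdsWithin_le_nhds).mul_const _
      rw [norm_zero, zero_mul] at T
      exact T.eventually_le_const (half_pos hε)
    filter_upwards [h1, h2, self_mem_nhdsWithin] with z hz1 hz2 hz0
    have hz0' : (z:ℂ) ≠ 0 := hz0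
    have hzpos : 0 < ‖z‖ := norm_pos_iff.mpr hz0'
    rw [sub_zero, norm_inv, mul_comm ε, ← div_eq_inv_mul, le_div_iff₀ hzpos]
    have e1 : ‖F z‖ * ‖z‖ = ‖z ^ (m+1) * g z‖ := by
      rw [← norm_mul]
      congr 1
      simp only [hFdef]
      ring
    calc ‖F z - F 0‖ * ‖z‖ ≤ (‖F z‖ + ‖F 0‖) * ‖z‖ := by
          apply mul_le_mul_of_nonneg_right _ (norm_nonneg _)
          exact (norm_sub_le _ _)
      _ = ‖F z‖ * ‖z‖ + ‖z‖ * ‖F 0‖ := by ring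
      _ ≤ ε/2 + ε/2 := add_le_add (e1 ▸ hz1) hz2
      _ = ε := by ring
  have hd : DifferentiableOn ℂ F (Metric.ball (0:ℂ) b \ {0}) := by
    rintro z ⟨hz1, hz2⟩
    have hz2' : z ≠ 0 := hz2
    have hmem : z ∈ {z : ℂ | 0 < ‖z‖ ∧ ‖z‖ < r} := by
      refine ⟨by simpa [norm_pos_iff] using hz2', ?_⟩
      have : ‖z‖ < b := by simpa using hz1
      exact lt_of_lt_of_le this hbr
    exact ((analyticAt_id.pow m).mul (hg z hmem)).differentiableAt.differentiableWithinAt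
  have hupd := Complex.differentiableOn_update_limUnder_of_isLittleO
    (Metric.ball_mem_nhds (0:ℂ) hb) hd ho
  refine ⟨Function.update F 0 (limUnder (𝓝[≠] (0:ℂ)) F),
    hupd.analyticOnNhd isOpen_ball, fun z hz0 _ => ?_⟩
  rw [Function.update_of_ne hz0]

/-- **Pole bound for the exponents of a closed decomposition.**
If `f` and `g` are analytic on the punctured disc `Δ_r \ {0}` and the sum
`f(z₁) + g(z₁(1+z₁^m z₂))` agrees with a function `V` analytic on a full bidisc
`Δ_s × Δ_s` (for some `0 < s < min r 1`), then `z ↦ z^m f(z)` and `z ↦ z^m g(z)`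
extend analytically across `0`; i.e. `f` and `g` have poles of order at most `m` at `0`. -/
theorem pole_bound_of_holomorphic_sum
    (m : ℕ) (r : ℝ) (hr : 0 < r) (f g : ℂ → ℂ)
    (hf : AnalyticOnNhd ℂ f {z : ℂ | 0 < ‖z‖ ∧ ‖z‖ < r})
    (hg : AnalyticOnNhd ℂ g {z : ℂ | 0 < ‖z‖ ∧ ‖z‖ < r})
    (hsum : ∃ s : ℝ, 0 < s ∧ s < min r 1 ∧
      ∃ V : ℂ × ℂ → ℂ,
        AnalyticOnNhd ℂ V {p : ℂ × ℂ | ‖p.1‖ < s ∧ ‖p.2‖ < s} ∧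
        ∀ z₁ z₂ : ℂ, 0 < ‖z₁‖ → ‖z₁‖ < s → ‖z₂‖ < s →
          (0 < ‖z₁ * (1 + z₁ ^ m * z₂)‖ ∧
            ‖z₁ * (1 + z₁ ^ m * z₂)‖ < r) ∧
          f z₁ + g (z₁ * (1 + z₁ ^ m * z₂)) = V (z₁, z₂)) :
    (∃ F : ℂ → ℂ,
        AnalyticOnNhd ℂ F {z : ℂ | ‖z‖ < r} ∧
        ∀ z : ℂ, 0 < ‖z‖ → ‖z‖ < r → F z = z ^ m * f z) ∧
    (∃ G : ℂ → ℂ,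
        AnalyticOnNhd ℂ G {z : ℂ | ‖z‖ < r} ∧
        ∀ z : ℂ, 0 < ‖z‖ → ‖z‖ < r → G z = z ^ m * g z) := by
  obtain ⟨s, hs0, hs1, V, hV, hrelfull⟩ := hsum
  have hsr : s < r := hs1.trans_le (min_le_left _ _)
  have hrel : ∀ z₁ z₂ : ℂ, 0 < ‖z₁‖ → ‖z₁‖ < s → ‖z₂‖ < s →
      f z₁ + g (z₁ * (1 + z₁ ^ m * z₂)) = V (z₁, z₂) :=
    fun z₁ z₂ h1 h2 h3 => (hrelfull z₁ z₂ h1 h2 h3).2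
  obtain ⟨C, hC0, hC⟩ := deriv_bound m r s hs0 hsr f g hg V hV hrel
  have ht : (0:ℝ) < s/2 := half_pos hs0
  have htr : s/2 < r := lt_trans (half_lt_self hs0) hsr
  have htend := tendsto_aux m r (s/2) ht htr g hg C hC0 hC
  obtain ⟨G₀, hG₀, hG₀eq⟩ := ext_aux m r s hs0 hsr.le g hg htend
  obtain ⟨G, hGa, hGeq⟩ := glue_aux m r s hs0 hsr.le g hg G₀ hG₀ hG₀eq
  refine ⟨?_, ⟨G, hGa, hGeq⟩⟩
  -- now build the extension for f
  set F₀ : ℂ → ℂ := fun z => z ^ m * V (z, 0) - G z with hF₀def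
  have hF₀ : AnalyticOnNhd ℂ F₀ (Metric.ball (0:ℂ) s) := by
    intro z hz
    have hzs : ‖z‖ < s := by simpa using hz
    have hinner : AnalyticAt ℂ (fun w : ℂ => (w, (0:ℂ))) z :=
      analyticAt_id.prod analyticAt_const
    have hVz : AnalyticAt ℂ (fun z : ℂ => V (z, 0)) z :=
      AnalyticAt.comp (f := fun w : ℂ => (w, (0:ℂ))) (x := z)
        (hV (z, 0) ⟨hzs, by simpa using hs0⟩) hinner
    exact ((analyticAt_id.pow m).mul hVz).sub (hGa z (lt_trans hzs hsr))
  have heqf : ∀ z : ℂ, z ≠ 0 → ‖z‖ < s → F₀ z = z ^ m * f z := by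
    intro z hz0 hzs
    have hpos : 0 < ‖z‖ := by simpa [norm_pos_iff] using hz0
    have h := hrel z 0 hpos hzs (by simpa using hs0)
    have harg : z * (1 + z ^ m * 0) = z := by ring
    rw [harg] at h
    have hGz : G z = z ^ m * g z := hGeq z hpos (lt_trans hzs hsr)
    simp only [hF₀def]
    rw [hGz, ← h]
    ring
  exact glue_aux m r s hs0 hsr.le f hf F₀ hF₀ heqf
end

section
/- Let r > 0 and let f̂ and ĝ be analytic nowhere-vanishing functions on the punctured disc Δ_r \ {0} ⊆ ℂ. Suppose the function z ↦ f̂(z)·ĝ(z) extends to an analytic nowhere-vanishing function on the full disc Δ_r. Then there exist an integer k and analytic functions f and g on Δ_r \ {0} such that f̂(z) = z^k·exp(f(z)) and ĝ(z) = z^{-k}·exp(g(z)) for all z with 0 < |z| < r. -/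
open Complex

section Auxiliary

open Metric Set
open scoped NNReal ENNReal Topology Real

/-- A holomorphic function on a ball (real radius) has a primitive there. -/
lemma exists_primitive_ball {c : ℂ} {R : ℝ} (hR : 0 < R) {u : ℂ → ℂ}
    (hu : DifferentiableOn ℂ u (ball c R)) :
    ∃ H : ℂ → ℂ, ∀ z ∈ ball c R, HasDerivAt H (u z) z := by
  set R₀ : ℝ≥0 := (R / 2).toNNReal with hR₀_def
  have hR₀_pos : 0 < R₀ := Real.toNNReal_pos.2 (by linarith)
  have hR₀_coe : (R₀ : ℝ) = R / 2 := Real.coe_toNNReal _ (by linarith)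
  have hsub₀ : closedBall c (R₀ : ℝ) ⊆ ball c R := by
    apply closedBall_subset_ball; rw [hR₀_coe]; linarith
  set p := cauchyPowerSeries u c R₀ with hp_def
  have hp₀ : HasFPowerSeriesOnBall u p c R₀ :=
    (hu.mono hsub₀).hasFPowerSeriesOnBall hR₀_pos
  have key : ∀ s : ℝ≥0, 0 < s → (s : ℝ) < R → HasFPowerSeriesOnBall u p c s := by
    intro s hs hsR
    have hsub : closedBall c (s : ℝ) ⊆ ball c R := closedBall_subset_ball hsR
    have hq : HasFPowerSeriesOnBall u (cauchyPowerSeries u c s) c s :=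
      (hu.mono hsub).hasFPowerSeriesOnBall hs
    have hpq : p = cauchyPowerSeries u c s :=
      hp₀.hasFPowerSeriesAt.eq_formalMultilinearSeries hq.hasFPowerSeriesAt
    rw [hpq]; exact hq
  set a : ℕ → ℂ := fun n => p.coeff n with ha_def
  set g : ℕ → ℂ → ℂ := fun n z => (a n / (n + 1)) * (z - c) ^ (n + 1) with hg_def
  set g' : ℕ → ℂ → ℂ := fun n z => a n * (z - c) ^ n with hg'_def
  have hderiv : ∀ n z, HasDerivAt (g n) (g' n z) z := by
    intro n z
    have h1 : HasDerivAt (fun z : ℂ => (z - c) ^ (n + 1))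
        (((n : ℂ) + 1) * (z - c) ^ n) z := by
      have := ((hasDerivAt_id z).sub_const c).pow (n + 1)
      simpa [Nat.add_sub_cancel, Nat.cast_add, Pi.pow_def] using this
    have h2 := h1.const_mul (a n / (n + 1))
    refine h2.congr_deriv ?_
    have hne : ((n : ℂ) + 1) ≠ 0 := Nat.cast_add_one_ne_zero n
    field_simp
    simp only [hg'_def]
  refine ⟨fun z => ∑' n, g n z, ?_⟩
  intro z₀ hz₀
  have hz₀R : ‖z₀ - c‖ < R := by simpa [dist_eq_norm] using hz₀
  set ρ : ℝ := (‖z₀ - c‖ + R) / 2 with hρ_def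
  have hρ0 : 0 < ρ := by have := norm_nonneg (z₀ - c); simp only [hρ_def]; linarith
  have hρ1 : ‖z₀ - c‖ < ρ := by simp only [hρ_def]; linarith
  have hρ2 : ρ < R := by simp only [hρ_def]; linarith
  set σ : ℝ := (ρ + R) / 2 with hσ_def
  have hσ1 : ρ < σ := by simp only [hσ_def]; linarith
  have hσ2 : σ < R := by simp only [hσ_def]; linarith
  have hσ0 : 0 < σ := lt_trans hρ0 hσ1
  set s : ℝ≥0 := σ.toNNReal with hs_def
  have hs_coe : (s : ℝ) = σ := Real.coe_toNNReal _ hσ0.le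
  have hs_pos : 0 < s := Real.toNNReal_pos.2 hσ0
  have hps : HasFPowerSeriesOnBall u p c s := key s hs_pos (by rw [hs_coe]; exact hσ2)
  set t : Set ℂ := ball c ρ with ht_def
  have hz₀t : z₀ ∈ t := by simpa [ht_def, dist_eq_norm] using hρ1
  have hct : c ∈ t := by simp only [ht_def, mem_ball, dist_self]; linarith
  have hsum : Summable fun n => ‖a n‖ * ρ ^ n := by
    have hlt : (ρ.toNNReal : ℝ≥0∞) < p.radius := by
      refine lt_of_lt_of_le (ENNReal.coe_lt_coe.mpr ?_) hps.r_le
      rw [hs_def]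
      exact (Real.toNNReal_lt_toNNReal_iff hσ0).mpr hσ1
    have h := p.summable_norm_mul_pow hlt
    refine h.congr fun n => ?_
    rw [p.norm_apply_eq_norm_coef, Real.coe_toNNReal _ hρ0.le]
  have hbound : ∀ n y, y ∈ t → ‖g' n y‖ ≤ ‖a n‖ * ρ ^ n := by
    intro n y hy
    have hy' : ‖y - c‖ ≤ ρ := le_of_lt (by simpa [ht_def, dist_eq_norm] using hy)
    calc ‖g' n y‖ = ‖a n‖ * ‖y - c‖ ^ n := by simp [hg'_def, norm_mul, norm_pow]
    _ ≤ ‖a n‖ * ρ ^ n :=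
        mul_le_mul_of_nonneg_left (pow_le_pow_left₀ (norm_nonneg _) hy' n) (norm_nonneg _)
  have hg0 : Summable fun n => g n c := by
    refine summable_of_ne_finset_zero (s := ∅) fun n _ => ?_
    simp [hg_def]
  have hmain := hasDerivAt_tsum_of_isPreconnected hsum isOpen_ball
    (convex_ball c ρ).isPreconnected (fun n y _ => hderiv n y) hbound hct hg0 hz₀t
  refine hmain.congr_deriv ?_
  have hmem : z₀ - c ∈ Metric.eball (0 : ℂ) (s : ℝ≥0∞) := by
    rw [Metric.emetric_ball_nnreal]
    simp only [mem_ball, dist_eq_norm, sub_zero]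
    rw [hs_coe]; linarith
  have hsum2 := hps.hasSum hmem
  rw [show c + (z₀ - c) = z₀ by ring] at hsum2
  rw [← hsum2.tsum_eq]
  refine tsum_congr fun n => ?_
  rw [FormalMultilinearSeries.apply_eq_pow_smul_coeff]
  simp [hg'_def, ha_def, smul_eq_mul, mul_comm]

/-- A nonvanishing holomorphic function on a ball has a holomorphic logarithm. -/
lemma exists_log_ball {c : ℂ} {R : ℝ} (hR : 0 < R) {h : ℂ → ℂ}
    (hd : DifferentiableOn ℂ h (ball c R)) (h0 : ∀ z ∈ ball c R, h z ≠ 0) :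
    ∃ L : ℂ → ℂ, DifferentiableOn ℂ L (ball c R) ∧ ∀ z ∈ ball c R, h z = Complex.exp (L z) := by
  have hopen : IsOpen (ball c R) := isOpen_ball
  have han : AnalyticOnNhd ℂ h (ball c R) := hd.analyticOnNhd hopen
  have hdan : AnalyticOnNhd ℂ (deriv h) (ball c R) := han.deriv
  have hu : DifferentiableOn ℂ (fun z => deriv h z / h z) (ball c R) :=
    (hdan.div han h0).differentiableOn
  obtain ⟨H, hH⟩ := exists_primitive_ball hR hu
  -- φ = h * exp (-H) is locally constant
  have hφ : ∀ z ∈ ball c R, HasDerivAt (fun w => h w * Complex.exp (-H w)) 0 z := by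
    intro z hz
    have h1 : HasDerivAt h (deriv h z) z :=
      ((hd.differentiableAt (hopen.mem_nhds hz)).hasDerivAt)
    have h2 : HasDerivAt (fun w => Complex.exp (-H w))
        (Complex.exp (-H z) * -(deriv h z / h z)) z := by
      have := ((hH z hz).neg).cexp
      simpa using this
    have := h1.mul h2
    refine this.congr_deriv ?_
    have hz0 : h z ≠ 0 := h0 z hz
    field_simp
    ring
  have hconst : ∀ z ∈ ball c R, h z * Complex.exp (-H z) = h c * Complex.exp (-H c) := by
    have hc : c ∈ ball c R := mem_ball_self hR
    intro z hz
    refine (convex_ball c R).is_const_of_fderivWithin_eq_zero (𝕜 := ℂ)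
      (f := fun w => h w * Complex.exp (-H w)) ?_ ?_ hz hc
    · intro w hw
      exact ((hφ w hw).differentiableAt.differentiableWithinAt)
    · intro w hw
      have := ((hφ w hw).hasFDerivAt.hasFDerivWithinAt).fderivWithin (hopen.uniqueDiffWithinAt hw)
      rw [this]
      ext v
      simp
  have hc : c ∈ ball c R := mem_ball_self hR
  set C : ℂ := h c * Complex.exp (-H c) with hC_def
  have hC0 : C ≠ 0 := mul_ne_zero (h0 c hc) (Complex.exp_ne_zero _)
  refine ⟨fun z => H z + Complex.log C, ?_, ?_⟩
  · intro z hz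
    exact (((hH z hz).differentiableAt).add_const _).differentiableWithinAt
  · intro z hz
    have h1 : h z * Complex.exp (-H z) = C := hconst z hz
    rw [Complex.exp_add, Complex.exp_log hC0]
    have h2 : Complex.exp (-H z) ≠ 0 := Complex.exp_ne_zero _
    field_simp [Complex.exp_neg] at h1 ⊢
    have hEE' : Complex.exp (H z) * Complex.exp (-H z) = 1 := by
      rw [← Complex.exp_add, add_neg_cancel, Complex.exp_zero]
    rw [hC_def] at h1
    linear_combination Complex.exp (H z) * h1 - h z * hEE'

/-- A nonvanishing holomorphic function on a left half-plane has a holomorphic logarithm. -/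
lemma exists_log_halfplane {c : ℝ} {h : ℂ → ℂ}
    (hd : ∀ w : ℂ, w.re < c → DifferentiableAt ℂ h w)
    (h0 : ∀ w : ℂ, w.re < c → h w ≠ 0) :
    ∃ L : ℂ → ℂ, (∀ w : ℂ, w.re < c → DifferentiableAt ℂ L w) ∧
      (∀ w : ℂ, w.re < c → h w = Complex.exp (L w)) := by
  set φ : ℂ → ℂ := fun z => (c : ℂ) - (1 + z) / (1 - z) with hφ_def
  set ψ : ℂ → ℂ := fun w => ((c : ℂ) - w - 1) / ((c : ℂ) - w + 1) with hψ_def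
  -- basic facts
  have hball : ∀ z : ℂ, z ∈ ball (0 : ℂ) 1 ↔ ‖z‖ < 1 := by
    intro z; simp [mem_ball, Complex.dist_eq]
  have hz_ne_one : ∀ z : ℂ, ‖z‖ < 1 → (1 : ℂ) - z ≠ 0 := by
    intro z hz hcon
    have : z = 1 := by linear_combination -hcon
    rw [this] at hz; simp at hz
  -- (a) φ maps the unit ball into the half-plane
  have hφ_maps : ∀ z : ℂ, ‖z‖ < 1 → (φ z).re < c := by
    intro z hz
    have hne := hz_ne_one z hz
    have hre : ((1 + z) / (1 - z)).re = (1 - ‖z‖ ^ 2) / ‖1 - z‖ ^ 2 := by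
      rw [Complex.div_re]
      rw [Complex.sq_norm, Complex.sq_norm]
      simp [Complex.normSq_apply, Complex.add_re, Complex.add_im, Complex.sub_re, Complex.sub_im]
      ring
    have hpos : 0 < ((1 + z) / (1 - z)).re := by
      rw [hre]
      apply div_pos
      · have : ‖z‖ ^ 2 < 1 := by
          have := norm_nonneg z
          nlinarith
        linarith
      · have h1 : ‖1 - z‖ ≠ 0 := fun hc => hne (norm_eq_zero.mp hc)
        positivity
    simp only [hφ_def, Complex.sub_re, Complex.ofReal_re]
    linarith
  -- (b) φ differentiable on the ball
  have hφ_diff : ∀ z : ℂ, ‖z‖ < 1 → DifferentiableAt ℂ φ z := by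
    intro z hz
    apply DifferentiableAt.sub
    · exact differentiableAt_const _
    · exact DifferentiableAt.div (by fun_prop) (by fun_prop) (hz_ne_one z hz)
  -- denominator of ψ is nonzero
  have hψ_den : ∀ w : ℂ, w.re < c → (c : ℂ) - w + 1 ≠ 0 := by
    intro w hw hcon
    have : ((c : ℂ) - w + 1).re = 0 := by rw [hcon]; simp
    simp only [Complex.add_re, Complex.sub_re, Complex.ofReal_re, Complex.one_re] at this
    linarith
  -- (c) ψ maps the half-plane into the unit ball
  have hψ_maps : ∀ w : ℂ, w.re < c → ‖ψ w‖ < 1 := by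
    intro w hw
    have hden := hψ_den w hw
    rw [hψ_def]
    simp only
    rw [norm_div, div_lt_one (norm_pos_iff.mpr hden)]
    have h1 : Complex.normSq ((c : ℂ) - w - 1) < Complex.normSq ((c : ℂ) - w + 1) := by
      simp only [Complex.normSq_apply, Complex.sub_re, Complex.sub_im, Complex.add_re,
        Complex.add_im, Complex.ofReal_re, Complex.ofReal_im, Complex.one_re, Complex.one_im]
      nlinarith [hw]
    have := Real.sqrt_lt_sqrt (Complex.normSq_nonneg _) h1
    simpa [Complex.norm_def] using this
  -- (d) ψ differentiable on the half-plane
  have hψ_diff : ∀ w : ℂ, w.re < c → DifferentiableAt ℂ ψ w := by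
    intro w hw
    exact DifferentiableAt.div (by fun_prop) (by fun_prop) (hψ_den w hw)
  -- (e) φ ∘ ψ = id on the half-plane
  have hφψ : ∀ w : ℂ, w.re < c → φ (ψ w) = w := by
    intro w hw
    have hden := hψ_den w hw
    have hne := hz_ne_one (ψ w) (hψ_maps w hw)
    rw [hφ_def, hψ_def]
    simp only
    rw [hψ_def] at hne
    field_simp at hne ⊢
    ring
  -- apply the ball lemma to h ∘ φ
  have hball_eq : ∀ z ∈ ball (0 : ℂ) 1, ‖z‖ < 1 := fun z hz => (hball z).1 hz
  obtain ⟨L', hL'd, hL'⟩ := exists_log_ball (c := 0) (R := 1) one_pos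
    (h := fun z => h (φ z))
    (fun z hz => ((hd _ (hφ_maps z (hball_eq z hz))).comp z
      (hφ_diff z (hball_eq z hz))).differentiableWithinAt)
    (fun z hz => h0 _ (hφ_maps z (hball_eq z hz)))
  refine ⟨fun w => L' (ψ w), ?_, ?_⟩
  · intro w hw
    have hmem : ψ w ∈ ball (0 : ℂ) 1 := (hball _).2 (hψ_maps w hw)
    have : DifferentiableAt ℂ L' (ψ w) :=
      hL'd.differentiableAt (isOpen_ball.mem_nhds hmem)
    exact this.comp w (hψ_diff w hw)
  · intro w hw
    have hmem : ψ w ∈ ball (0 : ℂ) 1 := (hball _).2 (hψ_maps w hw)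
    have := hL' (ψ w) hmem
    rwa [hφψ w hw] at this

end Auxiliary

section Main
open Metric Set
open scoped NNReal ENNReal Topology Real

/-- **Winding-number cancellation.**
If `f̂` and `ĝ` are analytic and nowhere vanishing on the punctured disc `Δ_r \ {0}`
and their product extends to an analytic nowhere-vanishing function on the full disc,
then `f̂(z) = z^k·exp(f(z))` and `ĝ(z) = z^{-k}·exp(g(z))` for some integer `k` and
analytic functions `f`, `g` on the punctured disc. -/
theorem winding_number_cancellation
    (r : ℝ) (hr : 0 < r) (fh gh : ℂ → ℂ)
    (hfh : AnalyticOnNhd ℂ fh {z : ℂ | 0 < ‖z‖ ∧ ‖z‖ < r})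
    (hgh : AnalyticOnNhd ℂ gh {z : ℂ | 0 < ‖z‖ ∧ ‖z‖ < r})
    (hfh0 : ∀ z : ℂ, 0 < ‖z‖ → ‖z‖ < r → fh z ≠ 0)
    (hgh0 : ∀ z : ℂ, 0 < ‖z‖ → ‖z‖ < r → gh z ≠ 0)
    (hext : ∃ P : ℂ → ℂ,
      AnalyticOnNhd ℂ P {z : ℂ | ‖z‖ < r} ∧
      (∀ z : ℂ, ‖z‖ < r → P z ≠ 0) ∧
      (∀ z : ℂ, 0 < ‖z‖ → ‖z‖ < r → P z = fh z * gh z)) :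
    ∃ k : ℤ, ∃ f g : ℂ → ℂ,
      AnalyticOnNhd ℂ f {z : ℂ | 0 < ‖z‖ ∧ ‖z‖ < r} ∧
      AnalyticOnNhd ℂ g {z : ℂ | 0 < ‖z‖ ∧ ‖z‖ < r} ∧
      (∀ z : ℂ, 0 < ‖z‖ → ‖z‖ < r →
        fh z = z ^ k * Complex.exp (f z) ∧ gh z = z ^ (-k) * Complex.exp (g z)) := by
  obtain ⟨P, hP, hP0, hPfg⟩ := hext
  set S : Set ℂ := {z : ℂ | 0 < ‖z‖ ∧ ‖z‖ < r} with hS_def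
  have hS_open : IsOpen S := by
    have : S = ((fun z : ℂ => ‖z‖) ⁻¹' (Ioi 0)) ∩ ((fun z : ℂ => ‖z‖) ⁻¹' (Iio r)) := by
      ext z; simp [hS_def, mem_preimage]
    rw [this]
    exact (isOpen_Ioi.preimage continuous_norm).inter
      (isOpen_Iio.preimage continuous_norm)
  set c : ℝ := Real.log r with hc_def
  -- the exponential maps the half-plane {re < c} onto the punctured disc
  have hexp_mem : ∀ w : ℂ, w.re < c → Complex.exp w ∈ S := by
    intro w hw
    constructor
    · rw [Complex.norm_exp]; exact Real.exp_pos _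
    · rw [Complex.norm_exp]
      calc Real.exp w.re < Real.exp c := Real.exp_lt_exp.2 hw
      _ = r := Real.exp_log hr
  -- log of fh ∘ exp on the half-plane
  obtain ⟨L, hLd, hL⟩ := exists_log_halfplane (c := c) (h := fun w => fh (Complex.exp w))
    (fun w hw => ((hfh _ (hexp_mem w hw)).differentiableAt).comp w differentiable_exp.differentiableAt)
    (fun w hw => hfh0 _ (hexp_mem w hw).1 (hexp_mem w hw).2)
  set T : ℂ := 2 * (π : ℂ) * I with hT_def
  have hT_re : T.re = 0 := by simp [hT_def]
  -- the period function
  set D : ℂ → ℂ := fun w => L (w + T) - L w with hD_def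
  have haddT_re : ∀ w : ℂ, (w + T).re = w.re := by
    intro w; simp [Complex.add_re, hT_re]
  have hexpD : ∀ w : ℂ, w.re < c → Complex.exp (D w) = 1 := by
    intro w hw
    have hw' : (w + T).re < c := by rw [haddT_re]; exact hw
    have h1 : Complex.exp (L (w + T)) = fh (Complex.exp (w + T)) := (hL _ hw').symm
    have h2 : Complex.exp (L w) = fh (Complex.exp w) := (hL _ hw).symm
    have h3 : Complex.exp (w + T) = Complex.exp w := by
      rw [hT_def]; exact Complex.exp_periodic w
    rw [hD_def]
    simp only
    rw [Complex.exp_sub, h1, h2, h3, div_self]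
    exact hfh0 _ (hexp_mem w hw).1 (hexp_mem w hw).2
  set U : Set ℂ := {w : ℂ | w.re < c} with hU_def
  have hU_open : IsOpen U := by
    have : U = Complex.re ⁻¹' (Iio c) := rfl
    rw [this]; exact isOpen_Iio.preimage Complex.continuous_re
  have hD_diff : ∀ w ∈ U, DifferentiableAt ℂ D w := by
    intro w hw
    have hw' : (w + T).re < c := by rw [haddT_re]; exact hw
    exact ((hLd _ hw').comp w ((differentiable_id.add_const T).differentiableAt)).sub (hLd w hw)
  -- D has zero derivative on U
  have hD_deriv : ∀ w ∈ U, HasDerivAt D 0 w := by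
    intro w hw
    have hdiff := (hD_diff w hw).hasDerivAt
    set d : ℂ := deriv D w with hd_def
    have h1 : HasDerivAt (fun v => Complex.exp (D v)) (Complex.exp (D w) * d) w := hdiff.cexp
    have h2 : (fun v => Complex.exp (D v)) =ᶠ[nhds w] fun _ => 1 := by
      filter_upwards [hU_open.mem_nhds hw] with v hv
      exact hexpD v hv
    have h3 : HasDerivAt (fun _ : ℂ => (1 : ℂ)) (Complex.exp (D w) * d) w :=
      h1.congr_of_eventuallyEq h2.symm
    have h4 : Complex.exp (D w) * d = 0 :=
      ((hasDerivAt_const w (1 : ℂ)).unique h3).symm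
    have hd0 : d = 0 := by
      have hexpne := Complex.exp_ne_zero (D w)
      exact (mul_eq_zero.mp h4).resolve_left hexpne
    rw [← hd0]; exact hdiff
  -- D is constant on U
  have hU_conv : Convex ℝ U := convex_halfSpace_re_lt c
  set w₀ : ℂ := ((c : ℂ) - 1) with hw₀_def
  have hw₀U : w₀ ∈ U := by
    simp only [hU_def, mem_setOf_eq, hw₀_def, Complex.sub_re, Complex.ofReal_re, Complex.one_re]
    linarith
  have hD_const : ∀ w ∈ U, D w = D w₀ := by
    intro w hw
    refine hU_conv.is_const_of_fderivWithin_eq_zero (𝕜 := ℂ) (f := D) ?_ ?_ hw hw₀U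
    · intro v hv; exact (hD_diff v hv).differentiableWithinAt
    · intro v hv
      have := ((hD_deriv v hv).hasFDerivAt.hasFDerivWithinAt).fderivWithin
        (hU_open.uniqueDiffWithinAt hv)
      rw [this]
      ext
      simp
  -- the winding number k
  obtain ⟨k, hk⟩ : ∃ n : ℤ, D w₀ = n * (2 * (π : ℂ) * I) :=
    Complex.exp_eq_one_iff.mp (hexpD w₀ hw₀U)
  -- the reduced logarithm F
  set F : ℂ → ℂ := fun w => L w - k * w with hF_def
  have hF_an : ∀ w ∈ U, AnalyticAt ℂ F w := by
    have hLdOn : DifferentiableOn ℂ L U := fun w hw => (hLd w hw).differentiableWithinAt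
    have hLan : AnalyticOnNhd ℂ L U := hLdOn.analyticOnNhd hU_open
    intro w hw
    exact (hLan w hw).sub ((analyticAt_const.mul analyticAt_id))
  -- F is invariant under shift by T
  have hF_shift : ∀ w ∈ U, F (w + T) = F w := by
    intro w hw
    have hDw : D w = (k : ℂ) * T := by rw [hD_const w hw, hk, hT_def]
    have : L (w + T) = L w + (k : ℂ) * T := by
      have : L (w + T) - L w = (k : ℂ) * T := hDw
      linear_combination this
    rw [hF_def]
    simp only
    rw [this]
    ring
  have hT_mem : ∀ w ∈ U, w + T ∈ U := fun w hw => by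
    simpa only [hU_def, mem_setOf_eq, haddT_re] using hw
  have hT_mem' : ∀ w ∈ U, w - T ∈ U := fun w hw => by
    have : (w - T).re = w.re := by simp [Complex.sub_re, hT_re]
    simpa only [hU_def, mem_setOf_eq, this] using hw
  have hTre : ∀ a : ℂ, a.im = 0 → (a * T).re = 0 := by
    intro a ha
    rw [Complex.mul_re, hT_re, ha]
    ring
  have hre_shift : ∀ (w : ℂ) (a : ℂ), a.re = 0 → (w + a ∈ U ↔ w ∈ U) := by
    intro w a ha
    simp only [hU_def, mem_setOf_eq, Complex.add_re, ha, add_zero]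
  have hF_perN : ∀ n : ℕ, ∀ w ∈ U, F (w + n * T) = F w := by
    intro n
    induction n with
    | zero => intro w hw; simp
    | succ m ih =>
      intro w hw
      have h2 : w + (m : ℂ) * T ∈ U := by
        rw [hre_shift w ((m : ℂ) * T) (hTre _ (by simp))]
        exact hw
      have h1 : w + ((m : ℕ) + 1 : ℂ) * T = (w + (m : ℂ) * T) + T := by ring
      push_cast
      rw [h1, hF_shift _ h2, ih w hw]
  have hF_perN' : ∀ n : ℕ, ∀ w ∈ U, F (w - n * T) = F w := by
    intro n w hw
    have h2 : w - (n : ℂ) * T ∈ U := by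
      rw [sub_eq_add_neg, hre_shift w (-((n : ℂ) * T))
        (by rw [Complex.neg_re, hTre _ (by simp), neg_zero])]
      exact hw
    have := hF_perN n _ h2
    rw [show w - (n : ℂ) * T + (n : ℂ) * T = w by ring] at this
    exact this.symm
  have hF_per : ∀ m : ℤ, ∀ w ∈ U, F (w + m * T) = F w := by
    intro m w hw
    obtain ⟨n, rfl | rfl⟩ := m.eq_nat_or_neg
    · have : ((n : ℤ) : ℂ) = (n : ℂ) := by push_cast; ring
      rw [this]; exact hF_perN n w hw
    · have : w + ((-(n : ℤ) : ℤ) : ℂ) * T = w - (n : ℂ) * T := by push_cast; ring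
      rw [this]; exact hF_perN' n w hw
  -- F takes equal values on preimages of the same point
  have hF_eq : ∀ w₁ w₂ : ℂ, w₁ ∈ U → w₂ ∈ U → Complex.exp w₁ = Complex.exp w₂ →
      F w₁ = F w₂ := by
    intro w₁ w₂ h1 h2 hexp
    obtain ⟨m, hm⟩ := Complex.exp_eq_exp_iff_exists_int.mp hexp
    rw [hm] at *
    exact hF_per m w₂ h2
  -- membership of principal logarithms in the half-plane
  have hlog_mem : ∀ z : ℂ, 0 < ‖z‖ → ‖z‖ < r →
      (Complex.log z).re < c := by
    intro z h1 h2
    rw [Complex.log_re]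
    exact Real.log_lt_log h1 h2
  set f : ℂ → ℂ := fun z => F (Complex.log z) with hf_def
  have hne_of_pos : ∀ z : ℂ, 0 < ‖z‖ → z ≠ 0 := by
    intro z h1 hz
    rw [hz] at h1; simp at h1
  -- the key identity for fh
  have hfhA : ∀ z : ℂ, 0 < ‖z‖ → ‖z‖ < r →
      fh z = z ^ k * Complex.exp (f z) := by
    intro z h1 h2
    have hz0 : z ≠ 0 := hne_of_pos z h1
    set w : ℂ := Complex.log z with hw_def
    have hwU : w.re < c := hlog_mem z h1 h2
    have hexpw : Complex.exp w = z := Complex.exp_log hz0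
    have h3 : fh z = Complex.exp (L w) := by
      have := hL w hwU
      rwa [hexpw] at this
    have hLFk : L w = F w + (k : ℂ) * w := by rw [hF_def]; ring
    rw [h3, hLFk, Complex.exp_add]
    rw [show Complex.exp ((k : ℂ) * w) = Complex.exp w ^ k from Complex.exp_int_mul w k]
    rw [hexpw, hf_def]
    ring
  -- f is analytic on the punctured disc
  have hf_an : AnalyticOnNhd ℂ f S := by
    intro z₀ hz₀
    obtain ⟨h1, h2⟩ := hz₀
    have hz0 : z₀ ≠ 0 := hne_of_pos z₀ h1
    by_cases hslit : z₀ ∈ Complex.slitPlane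
    · have hFan : AnalyticAt ℂ F (Complex.log z₀) := hF_an _ (hlog_mem z₀ h1 h2)
      have := hFan.comp (analyticAt_clog hslit)
      simpa [Function.comp_def, hf_def] using this
    · have hz₀re : z₀.re < 0 := by
        rw [Complex.mem_slitPlane_iff] at hslit
        push_neg at hslit
        rcases lt_or_eq_of_le hslit.1 with h | h
        · exact h
        · exfalso
          exact hz0 (Complex.ext (by simpa using h) (by simpa using hslit.2))
      set ℓ : ℂ → ℂ := fun z => Complex.log (-z) + ↑Real.pi * I with hℓ_def
      have hℓ_an : AnalyticAt ℂ ℓ z₀ := by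
        have hm : -z₀ ∈ Complex.slitPlane := by
          rw [Complex.mem_slitPlane_iff]
          left
          rw [Complex.neg_re]
          linarith
        have h₁ : AnalyticAt ℂ (fun z : ℂ => Complex.log (-z)) z₀ :=
          (analyticAt_clog hm).comp ((analyticAt_id (𝕜 := ℂ) (z := z₀)).neg)
        exact h₁.add analyticAt_const
      have hexpℓ : ∀ z : ℂ, z ≠ 0 → Complex.exp (ℓ z) = z := by
        intro z hz
        rw [hℓ_def]
        simp only
        rw [Complex.exp_add, Complex.exp_log (neg_ne_zero.2 hz), Complex.exp_pi_mul_I]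
        ring
      have hℓ_re : ∀ z : ℂ, (ℓ z).re = Real.log (‖z‖) := by
        intro z
        rw [hℓ_def]
        simp only [Complex.add_re, Complex.log_re, norm_neg]
        have : ((Real.pi : ℂ) * I).re = 0 := by simp
        rw [this, add_zero]
      have heq : ∀ z ∈ S, f z = F (ℓ z) := by
        intro z hzS
        obtain ⟨hz1, hz2⟩ := hzS
        have hz0' : z ≠ 0 := hne_of_pos z hz1
        apply hF_eq
        · exact hlog_mem z hz1 hz2
        · show (ℓ z).re < c
          rw [hℓ_re z]
          exact Real.log_lt_log hz1 hz2
        · rw [Complex.exp_log hz0', hexpℓ z hz0']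
      have hℓU : (ℓ z₀) ∈ U := by
        show (ℓ z₀).re < c
        rw [hℓ_re z₀]
        exact Real.log_lt_log h1 h2
      have hFℓ : AnalyticAt ℂ (fun z => F (ℓ z)) z₀ := by
        have := (hF_an _ hℓU).comp hℓ_an
        simpa [Function.comp_def] using this
      refine hFℓ.congr ?_
      filter_upwards [hS_open.mem_nhds ⟨h1, h2⟩] with z hz
      exact (heq z hz).symm
  -- logarithm of the extension P on the full disc
  have hdisc : ball (0 : ℂ) r = {z : ℂ | ‖z‖ < r} := by
    ext z; simp [mem_ball, Complex.dist_eq]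
  have hPd : DifferentiableOn ℂ P (ball (0 : ℂ) r) := by
    rw [hdisc]
    intro z hz
    exact ((hP z hz).differentiableAt).differentiableWithinAt
  obtain ⟨Q, hQd, hQ⟩ := exists_log_ball hr hPd
    (by rw [hdisc]; intro z hz; exact hP0 z hz)
  set g : ℂ → ℂ := fun z => Q z - f z with hg_def
  have hQan : AnalyticOnNhd ℂ Q (ball (0 : ℂ) r) := hQd.analyticOnNhd isOpen_ball
  have hg_an : AnalyticOnNhd ℂ g S := by
    intro z hz
    obtain ⟨hz1, hz2⟩ := hz
    have hzb : z ∈ ball (0 : ℂ) r := by rw [hdisc]; exact hz2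
    exact (hQan z hzb).sub (hf_an z ⟨hz1, hz2⟩)
  refine ⟨k, f, g, hf_an, hg_an, ?_⟩
  intro z h1 h2
  refine ⟨hfhA z h1 h2, ?_⟩
  have hz0 : z ≠ 0 := hne_of_pos z h1
  have hfz := hfhA z h1 h2
  have hPz : P z = Complex.exp (Q z) := hQ z (by rw [hdisc]; exact h2)
  have hfgz : fh z * gh z = Complex.exp (Q z) := by
    rw [← hPfg z h1 h2, hPz]
  have hfh_ne := hfh0 z h1 h2
  have key : fh z * (z ^ (-k) * Complex.exp (g z)) = fh z * gh z := by
    rw [hfgz, hfz]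
    have hzk : z ^ k * z ^ (-k) = 1 := by
      rw [← zpow_add₀ hz0]
      simp
    calc z ^ k * Complex.exp (f z) * (z ^ (-k) * Complex.exp (g z))
        = (z ^ k * z ^ (-k)) * (Complex.exp (f z) * Complex.exp (g z)) := by ring
      _ = Complex.exp (f z) * Complex.exp (g z) := by rw [hzk, one_mul]
      _ = Complex.exp (f z + g z) := (Complex.exp_add _ _).symm
      _ = Complex.exp (Q z) := by
          congr 1
          rw [hg_def]
          ring
  exact (mul_left_cancel₀ hfh_ne key).symm

end Main
end

section
/- Let ε > 0, let D = Δ_ε × Δ_ε ⊆ ℂ², and let g and w₁ be analytic functions on D with g not identically zero and with the derivative Dw₁ nowhere vanishing on D. Assume the function z₂ ↦ (∂w₁/∂z₂)(0,z₂) is not identically zero on Δ_ε (i.e. the leaf {z₁ = 0} is not a common leaf of the pair of foliations defined by dz₁ and dw₁). Suppose every point p ∈ D with (∂w₁/∂z₂)(p) ≠ 0 has an open neighborhood V ⊆ D and one-variable analytic functions f and h with g(z₁,z₂) = f(z₁)·h(w₁(z₁,z₂)) on V. Then there exist an open neighborhood W of (0,0), a one-variable analytic function f̂, and an analytic function ĥ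 on W satisfying (∂ĥ/∂z₁)·(∂w₁/∂z₂) = (∂ĥ/∂z₂)·(∂w₁/∂z₁) on W (i.e. dĥ ∧ dw₁ ≡ 0), such that g(z₁,z₂) = f̂(z₁)·ĥ(z₁,z₂) for all (z₁,z₂) ∈ W. -/
open Complex


open Complex Metric MeasureTheory intervalIntegral
open scoped NNReal ENNReal

noncomputable section
namespace TangencyAux

abbrev S (δ ε : ℝ) : Set (ℂ × ℂ) := Metric.ball (0:ℂ) δ ×ˢ Metric.ball (0:ℂ) ε

lemma isOpenS (δ ε : ℝ) : IsOpen (S δ ε) := (isOpen_ball).prod isOpen_ball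

lemma memS {δ ε : ℝ} {p : ℂ × ℂ} : p ∈ S δ ε ↔ ‖p.1‖ < δ ∧ ‖p.2‖ < ε := by
  simp [S, Set.mem_prod, mem_ball_zero_iff]

/-- derivative along the first coordinate -/
def D1 (g : ℂ × ℂ → ℂ) : ℂ × ℂ → ℂ := fun q => fderiv ℂ g q (1, 0)

lemma analyticOnNhd_D1 {g : ℂ × ℂ → ℂ} {s : Set (ℂ × ℂ)} (hg : AnalyticOnNhd ℂ g s) :
    AnalyticOnNhd ℂ (D1 g) s := by
  intro q hq
  exact ((ContinuousLinearMap.apply ℂ ℂ ((1:ℂ),(0:ℂ))).analyticAt _).comp (hg q hq).fderiv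

end TangencyAux

namespace TangencyAux

variable {δ ε : ℝ} {g : ℂ × ℂ → ℂ}

/-- The candidate quotient: integral form. -/
def Q (g : ℂ × ℂ → ℂ) : ℂ × ℂ → ℂ := fun p => ∫ t in (0:ℝ)..1, D1 g ((t : ℂ) * p.1, p.2)

lemma Q_key (hδ : 0 < δ) (hε : 0 < ε) (hg : AnalyticOnNhd ℂ g (S δ ε))
    (h0 : ∀ z₂ ∈ Metric.ball (0:ℂ) ε, g (0, z₂) = 0) :
    ∀ p ∈ S δ ε, g p = p.1 * Q g p := by
  rintro ⟨z₁, z₂⟩ hp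
  obtain ⟨hp1, hp2⟩ := hp
  simp only [mem_ball_zero_iff] at hp1 hp2
  -- the path t ↦ (t z₁, z₂) stays in S
  have hmem : ∀ t : ℝ, t ∈ Set.uIcc (0:ℝ) 1 → ((t:ℂ) * z₁, z₂) ∈ S δ ε := by
    intro t ht
    rw [Set.uIcc_of_le zero_le_one] at ht
    constructor
    · simp only [mem_ball_zero_iff, norm_mul, Complex.norm_real, Real.norm_eq_abs]
      calc |t| * ‖z₁‖ ≤ 1 * ‖z₁‖ := by
            apply mul_le_mul_of_nonneg_right _ (norm_nonneg _)
            rw [abs_le]; exact ⟨le_trans (by norm_num) ht.1, ht.2⟩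
        _ < δ := by rwa [one_mul]
    · simpa [mem_ball_zero_iff] using hp2
  have hderiv : ∀ t : ℝ, t ∈ Set.uIcc (0:ℝ) 1 →
      HasDerivAt (fun s : ℝ => g ((s:ℂ) * z₁, z₂)) (z₁ * D1 g ((t:ℂ) * z₁, z₂)) t := by
    intro t ht
    have hdg : DifferentiableAt ℂ g ((t:ℂ) * z₁, z₂) :=
      (hg _ (hmem t ht)).differentiableAt
    have hline : HasDerivAt (fun s : ℂ => (s * z₁, z₂)) ((z₁ : ℂ), (0:ℂ)) (t:ℂ) := by
      have h1 : HasDerivAt (fun s : ℂ => s * z₁) z₁ (t:ℂ) := by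
        simpa using (hasDerivAt_id ((t:ℂ))).mul_const z₁
      exact h1.prodMk (hasDerivAt_const _ _)
    have hcomp : HasDerivAt (fun s : ℂ => g (s * z₁, z₂))
        (fderiv ℂ g ((t:ℂ) * z₁, z₂) (z₁, 0)) (t:ℂ) := by
      exact (hdg.hasFDerivAt.comp_hasDerivAt (t:ℂ) hline)
    have : fderiv ℂ g ((t:ℂ) * z₁, z₂) ((z₁:ℂ), (0:ℂ)) = z₁ * D1 g ((t:ℂ) * z₁, z₂) := by
      have : ((z₁:ℂ), (0:ℂ)) = z₁ • ((1:ℂ), (0:ℂ)) := by simp [Prod.ext_iff]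
      rw [this, ContinuousLinearMap.map_smul, smul_eq_mul]; rfl
    rw [← this]
    exact hcomp.comp_ofReal
  have hcont : ContinuousOn (fun t : ℝ => z₁ * D1 g ((t:ℂ) * z₁, z₂)) (Set.uIcc (0:ℝ) 1) := by
    apply ContinuousOn.mul continuousOn_const
    intro t ht
    have : ContinuousAt (D1 g) ((t:ℂ) * z₁, z₂) :=
      (analyticOnNhd_D1 hg _ (hmem t ht)).continuousAt
    have hc : Continuous fun t : ℝ => ((t:ℂ) * z₁, z₂) := by fun_prop
    have hc' : ContinuousAt (fun t : ℝ => ((t:ℂ) * z₁, z₂)) t := hc.continuousAt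
    exact (ContinuousAt.comp (x := t) this hc').continuousWithinAt
  have hint : IntervalIntegrable (fun t : ℝ => z₁ * D1 g ((t:ℂ) * z₁, z₂)) volume 0 1 :=
    hcont.intervalIntegrable
  have := intervalIntegral.integral_eq_sub_of_hasDerivAt hderiv hint
  rw [intervalIntegral.integral_const_mul] at this
  simp only [Complex.ofReal_one, Complex.ofReal_zero, one_mul, zero_mul] at this
  rw [h0 z₂ (by simpa [mem_ball_zero_iff] using hp2), sub_zero] at this
  rw [← this]; rfl

lemma Q_analytic_ne (hδ : 0 < δ) (hε : 0 < ε) (hg : AnalyticOnNhd ℂ g (S δ ε))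
    (h0 : ∀ z₂ ∈ Metric.ball (0:ℂ) ε, g (0, z₂) = 0)
    {p : ℂ × ℂ} (hp : p ∈ S δ ε) (hp1 : p.1 ≠ 0) : AnalyticAt ℂ (Q g) p := by
  have heq : ∀ᶠ q in nhds p, (fun q : ℂ × ℂ => g q / q.1) q = Q g q := by
    have hop : IsOpen (S δ ε ∩ {q : ℂ × ℂ | q.1 ≠ 0}) :=
      (isOpenS δ ε).inter (isOpen_ne_fun (by fun_prop) continuous_const)
    filter_upwards [hop.mem_nhds ⟨hp, hp1⟩] with q hq
    have := Q_key hδ hε hg h0 q hq.1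
    rw [div_eq_iff hq.2, this]; ring
  have han : AnalyticAt ℂ (fun q : ℂ × ℂ => g q / q.1) p :=
    (hg p hp).div analyticAt_fst hp1
  exact han.congr heq

end TangencyAux

namespace TangencyAux

variable {δ ε : ℝ} {g : ℂ × ℂ → ℂ}

lemma Q_analytic_zero (hg : AnalyticOnNhd ℂ g (S δ ε))
    {p : ℂ × ℂ} (hp : p ∈ S δ ε) (hp1 : p.1 = 0) : AnalyticAt ℂ (Q g) p := by
  classical
  obtain ⟨ps, hpsAt⟩ := analyticOnNhd_D1 hg p hp
  obtain ⟨r, hr⟩ := hpsAt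
  obtain ⟨ρ, hρ0, hρr⟩ := ENNReal.lt_iff_exists_nnreal_btwn.mp hr.r_pos
  have hρ0' : 0 < ρ := by exact_mod_cast hρ0
  set A : ℂ × ℂ →L[ℂ] ℂ × ℂ := (ContinuousLinearMap.fst ℂ ℂ ℂ).prod 0 with hA
  set B : ℂ × ℂ →L[ℂ] ℂ × ℂ := ContinuousLinearMap.prod 0 (ContinuousLinearMap.snd ℂ ℂ ℂ)
    with hB
  have hAv : ∀ v : ℂ × ℂ, A v = (v.1, 0) := fun v => rfl
  have hBv : ∀ v : ℂ × ℂ, B v = (0, v.2) := fun v => rfl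
  have hAn : ‖A‖ ≤ 1 := by
    apply ContinuousLinearMap.opNorm_le_bound _ zero_le_one
    intro v
    rw [hAv, one_mul]
    calc ‖((v.1 : ℂ), (0:ℂ))‖ = ‖v.1‖ := by simp [Prod.norm_def]
      _ ≤ ‖v‖ := norm_fst_le v
  have hBn : ‖B‖ ≤ 1 := by
    apply ContinuousLinearMap.opNorm_le_bound _ zero_le_one
    intro v
    rw [hBv, one_mul]
    calc ‖((0:ℂ), (v.2 : ℂ))‖ = ‖v.2‖ := by simp [Prod.norm_def]
      _ ≤ ‖v‖ := norm_snd_le v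
  set qs : FormalMultilinearSeries ℂ (ℂ × ℂ) ℂ := fun n =>
    ∑ s : Finset (Fin n), (((s.card : ℂ) + 1))⁻¹ •
      (ps n).compContinuousLinearMap (fun i => if i ∈ s then A else B) with hqs
  have hqsnorm : ∀ n, ‖qs n‖ ≤ 2 ^ n * ‖ps n‖ := by
    intro n
    calc ‖qs n‖ ≤ ∑ s : Finset (Fin n), ‖(((s.card : ℂ) + 1))⁻¹ •
          (ps n).compContinuousLinearMap (fun i => if i ∈ s then A else B)‖ :=
        norm_sum_le _ _
      _ ≤ ∑ _s : Finset (Fin n), ‖ps n‖ := by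
        apply Finset.sum_le_sum
        intro s _
        refine le_trans (ContinuousMultilinearMap.opNorm_smul_le
          ((((s.card : ℂ) + 1))⁻¹)
          ((ps n).compContinuousLinearMap (fun i => if i ∈ s then A else B))) ?_
        have h1 : ‖(((s.card : ℂ) + 1))⁻¹‖ ≤ 1 := by
          rw [norm_inv]
          have h1' : (1:ℝ) ≤ ‖((s.card : ℂ) + 1)‖ := by
            have he : ((s.card : ℂ) + 1) = ((s.card + 1 : ℕ) : ℂ) := by push_cast; ring
            rw [he, Complex.norm_natCast]
            exact_mod_cast Nat.one_le_iff_ne_zero.mpr (Nat.succ_ne_zero _)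
          exact inv_le_one_of_one_le₀ h1'
        have h2 : ‖(ps n).compContinuousLinearMap (fun i => if i ∈ s then A else B)‖
            ≤ ‖ps n‖ := by
          refine le_trans
            (ContinuousMultilinearMap.norm_compContinuousLinearMap_le _ _) ?_
          have hprod : ∏ i : Fin n, ‖if i ∈ s then A else B‖ ≤ 1 := by
            apply Finset.prod_le_one (fun i _ => norm_nonneg _)
            intro i _
            by_cases h : i ∈ s <;> simp only [h, if_true, if_false] <;> assumption
          calc ‖ps n‖ * ∏ i : Fin n, ‖if i ∈ s then A else B‖ ≤ ‖ps n‖ * 1 :=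
              mul_le_mul_of_nonneg_left hprod (norm_nonneg _)
            _ = ‖ps n‖ := mul_one _
        calc ‖(((s.card : ℂ) + 1))⁻¹‖ * ‖(ps n).compContinuousLinearMap
              (fun i => if i ∈ s then A else B)‖ ≤ 1 * ‖ps n‖ :=
            mul_le_mul h1 h2 (norm_nonneg _) zero_le_one
          _ = ‖ps n‖ := one_mul _
      _ = 2 ^ n * ‖ps n‖ := by
        rw [Finset.sum_const, Finset.card_univ, Fintype.card_finset, Fintype.card_fin,
          nsmul_eq_mul]
        push_cast
        ring
  -- summability of the majorant
  have hsum_ps : Summable fun n => ‖ps n‖ * (ρ : ℝ) ^ n :=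
    ps.summable_norm_mul_pow (lt_of_lt_of_le hρr hr.r_le)
  have hsum_qs : Summable fun n => ‖qs n‖ * (((ρ : ℝ)) / 2) ^ n := by
    refine Summable.of_nonneg_of_le (fun n => by positivity) (fun n => ?_) hsum_ps
    have h1 : ‖qs n‖ * ((ρ : ℝ) / 2) ^ n ≤ (2 ^ n * ‖ps n‖) * ((ρ : ℝ) / 2) ^ n :=
      mul_le_mul_of_nonneg_right (hqsnorm n) (by positivity)
    have h2 : (2 ^ n * ‖ps n‖) * ((ρ : ℝ) / 2) ^ n = ‖ps n‖ * (ρ : ℝ) ^ n := by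
      rw [div_pow]
      field_simp
    linarith
  have hradius : (↑(ρ / 2) : ℝ≥0∞) ≤ qs.radius := by
    apply qs.le_radius_of_summable
    have : ((ρ / 2 : ℝ≥0) : ℝ) = (ρ : ℝ) / 2 := by push_cast; ring
    rw [this]
    exact hsum_qs
  -- the power series representation
  have hball : HasFPowerSeriesOnBall (Q g) qs p (↑(ρ / 2)) := by
    refine ⟨hradius, ?_, ?_⟩
    · exact_mod_cast half_pos hρ0'
    · intro y hy
      rw [mem_emetric_ball_zero_iff] at hy
      have hy' : ‖y‖ < (ρ : ℝ) := by
        have h2 : (‖y‖₊ : ℝ≥0) < ρ / 2 := by exact_mod_cast hy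
        have := lt_of_lt_of_le h2 (half_le_self (by positivity))
        exact_mod_cast this
      -- notation for the path
      set wt : ℝ → ℂ × ℂ := fun t => ((t : ℂ) * y.1, y.2) with hwt
      have hwt_norm : ∀ t ∈ Set.Ioc (0:ℝ) 1, ‖wt t‖ ≤ ‖y‖ := by
        intro t ht
        rw [hwt]
        simp only [Prod.norm_def]
        apply max_le_max
        · rw [norm_mul, Complex.norm_real, Real.norm_eq_abs, abs_of_pos ht.1]
          calc t * ‖y.1‖ ≤ 1 * ‖y.1‖ :=
              mul_le_mul_of_nonneg_right ht.2 (norm_nonneg _)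
            _ = ‖y.1‖ := one_mul _
        · exact le_refl _
      have hDsum : ∀ t ∈ Set.Ioc (0:ℝ) 1,
          HasSum (fun n => ps n fun _ => wt t) (D1 g (p + wt t)) := by
        intro t ht
        apply hr.hasSum
        rw [mem_emetric_ball_zero_iff]
        have h1 : (‖wt t‖₊ : ℝ≥0∞) ≤ (‖y‖₊ : ℝ≥0∞) := by
          rw [ENNReal.coe_le_coe, ← NNReal.coe_le_coe, coe_nnnorm, coe_nnnorm]
          exact hwt_norm t ht
        have h2 : (‖y‖₊ : ℝ≥0∞) < r := by
          refine lt_trans ?_ hρr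
          rw [ENNReal.coe_lt_coe, ← NNReal.coe_lt_coe, coe_nnnorm]
          exact hy'
        exact lt_of_le_of_lt h1 h2
      set F : ℕ → ℝ → ℂ := fun n t => ps n (fun _ => wt t) with hF
      have hFcont : ∀ n, Continuous (F n) := by
        intro n
        apply (ps n).coe_continuous.comp
        apply continuous_pi
        intro _
        fun_prop
      have hFint : ∀ n, Integrable (F n) (volume.restrict (Set.Ioc (0:ℝ) 1)) := by
        intro n
        rw [← IntegrableOn]
        exact (hFcont n).integrableOn_Ioc
      have hFbound : ∀ n, ∀ t ∈ Set.Ioc (0:ℝ) 1, ‖F n t‖ ≤ ‖ps n‖ * ‖y‖ ^ n := by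
        intro n t ht
        calc ‖F n t‖ ≤ ‖ps n‖ * ∏ _i : Fin n, ‖wt t‖ := (ps n).le_opNorm _
          _ = ‖ps n‖ * ‖wt t‖ ^ n := by rw [Finset.prod_const, Finset.card_univ,
              Fintype.card_fin]
          _ ≤ ‖ps n‖ * ‖y‖ ^ n := by
            apply mul_le_mul_of_nonneg_left _ (norm_nonneg _)
            exact pow_le_pow_left₀ (norm_nonneg _) (hwt_norm t ht) n
      have hIb : ∀ n, ∫ t, ‖F n t‖ ∂(volume.restrict (Set.Ioc (0:ℝ) 1)) ≤
          ‖ps n‖ * ‖y‖ ^ n := by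
        intro n
        have hle : ∫ t, ‖F n t‖ ∂(volume.restrict (Set.Ioc (0:ℝ) 1)) ≤
            ∫ _t, ‖ps n‖ * ‖y‖ ^ n ∂(volume.restrict (Set.Ioc (0:ℝ) 1)) := by
          apply integral_mono_ae ((hFint n).norm) (integrable_const _)
          filter_upwards [MeasureTheory.ae_restrict_mem measurableSet_Ioc] with t ht
          exact hFbound n t ht
        rw [MeasureTheory.integral_const] at hle
        simpa [Real.volume_Ioc] using hle
      have hFsum : Summable fun n => ∫ t, ‖F n t‖ ∂(volume.restrict (Set.Ioc (0:ℝ) 1)) := by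
        apply Summable.of_nonneg_of_le
          (fun n => integral_nonneg (fun t => norm_nonneg _)) (fun n => hIb n)
        exact Summable.of_nonneg_of_le (fun n => by positivity)
          (fun n => mul_le_mul_of_nonneg_left
            (pow_le_pow_left₀ (norm_nonneg _) (le_of_lt hy') n) (norm_nonneg _)) hsum_ps
      have hmain := MeasureTheory.hasSum_integral_of_summable_integral_norm hFint hFsum
      -- identify the sum: ∫ tsum = Q g (p + y)
      have hval : ∫ t, (∑' n, F n t) ∂(volume.restrict (Set.Ioc (0:ℝ) 1)) = Q g (p + y) := by
        have h1 : ∫ t, (∑' n, F n t) ∂(volume.restrict (Set.Ioc (0:ℝ) 1)) =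
            ∫ t in Set.Ioc (0:ℝ) 1, D1 g (p + wt t) := by
          apply setIntegral_congr_fun measurableSet_Ioc
          intro t ht
          exact (hDsum t ht).tsum_eq
        rw [h1]
        rw [← intervalIntegral.integral_of_le zero_le_one]
        show _ = ∫ t in (0:ℝ)..1, D1 g ((t : ℂ) * (p + y).1, (p + y).2)
        apply intervalIntegral.integral_congr
        intro t _
        show D1 g (p + wt t) = D1 g ((t : ℂ) * (p + y).1, (p + y).2)
        have hpt : p + wt t = ((t:ℂ) * (p + y).1, (p + y).2) := by
          rw [hwt]
          rw [Prod.ext_iff]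
          constructor
          · show p.1 + (t:ℂ) * y.1 = (t:ℂ) * (p.1 + y.1)
            rw [hp1]; ring
          · rfl
        rw [hpt]
      -- identify each term: ∫ F n = qs n (y, ..., y)
      have hterm : ∀ n, ∫ t, F n t ∂(volume.restrict (Set.Ioc (0:ℝ) 1)) =
          qs n (fun _ => y) := by
        intro n
        have hsplit : ∀ t : ℝ, F n t =
            ∑ s : Finset (Fin n), (t:ℂ) ^ s.card •
              ps n (fun i => if i ∈ s then A y else B y) := by
          intro t
          have harg : (fun _ : Fin n => wt t) =
              (fun _ : Fin n => (t:ℂ) • (A y)) + (fun _ : Fin n => B y) := by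
            funext i
            rw [hwt]
            simp only [Pi.add_apply, hAv, hBv, Prod.smul_mk, smul_eq_mul, Prod.mk_add_mk,
              mul_zero, add_zero, zero_add]
          rw [hF]
          simp only
          rw [harg, (ps n).map_add_univ]
          apply Finset.sum_congr rfl
          intro s _
          have hls : s.piecewise (fun _ : Fin n => (t:ℂ) • (A y)) (fun _ : Fin n => B y)
              = s.piecewise (fun i => (t:ℂ) • (if i ∈ s then A y else B y))
                (fun i => if i ∈ s then A y else B y) := by
            funext i
            by_cases h : i ∈ s
            · simp only [Finset.piecewise_eq_of_mem _ _ _ h, if_pos h]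
            · simp only [Finset.piecewise_eq_of_notMem _ _ _ h, if_neg h]
          have hrs : s.piecewise (fun i => (t:ℂ) • (if i ∈ s then A y else B y))
                (fun i => if i ∈ s then A y else B y)
              = s.piecewise (fun i => (t:ℂ) •
                  (fun j => if j ∈ s then A y else B y) i)
                (fun i => if i ∈ s then A y else B y) := rfl
          rw [hls, hrs, (ps n).map_piecewise_smul, Finset.prod_const]
        have : ∫ t, F n t ∂(volume.restrict (Set.Ioc (0:ℝ) 1)) =
            ∫ t in (0:ℝ)..1, F n t := by
          rw [intervalIntegral.integral_of_le zero_le_one]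
        rw [this]
        rw [intervalIntegral.integral_congr (g := fun t =>
          ∑ s : Finset (Fin n), (t:ℂ) ^ s.card •
            ps n (fun i => if i ∈ s then A y else B y)) (fun t _ => hsplit t)]
        rw [intervalIntegral.integral_finset_sum]
        · have hone : ∀ (m : ℕ) (c : ℂ), ∫ t in (0:ℝ)..1, (t:ℂ) ^ m • c =
              ((m : ℂ) + 1)⁻¹ • c := by
            intro m c
            simp only [smul_eq_mul]
            rw [intervalIntegral.integral_mul_const]
            have hcast : (fun t : ℝ => (t:ℂ) ^ m) = fun t : ℝ => ((t ^ m : ℝ) : ℂ) := by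
              funext t; push_cast; ring
            rw [hcast, intervalIntegral.integral_ofReal, integral_pow]
            have hm : ((m:ℂ) + 1) ≠ 0 := Nat.cast_add_one_ne_zero m
            rw [one_pow, zero_pow (Nat.succ_ne_zero m), sub_zero]
            push_cast
            field_simp
          rw [hqs]
          simp only [ContinuousMultilinearMap.sum_apply,
            ContinuousMultilinearMap.smul_apply,
            ContinuousMultilinearMap.compContinuousLinearMap_apply]
          apply Finset.sum_congr rfl
          intro s _
          rw [hone s.card (ps n (fun i => if i ∈ s then A y else B y))]
          have harg2 : (fun i => if i ∈ s then A y else B y) =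
              (fun i : Fin n => (if i ∈ s then A else B) y) := by
            funext i
            by_cases h : i ∈ s <;> simp [h]
          rw [harg2]
        · intro s _
          apply Continuous.intervalIntegrable
          fun_prop
      have hfinal : HasSum (fun n => qs n (fun _ => y)) (Q g (p + y)) := by
        rw [← hval]
        have := hmain
        have hfun : (fun n => qs n (fun _ => y)) =
            fun n => ∫ t, F n t ∂(volume.restrict (Set.Ioc (0:ℝ) 1)) := by
          funext n
          exact (hterm n).symm
        rw [hfun]; exact this
      exact hfinal
  exact hball.analyticAt

end TangencyAux

namespace TangencyAux

variable {δ ε : ℝ} {g : ℂ × ℂ → ℂ}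

lemma lemmaA (hδ : 0 < δ) (hε : 0 < ε) (hg : AnalyticOnNhd ℂ g (S δ ε))
    (h0 : ∀ z₂ ∈ Metric.ball (0:ℂ) ε, g (0, z₂) = 0) :
    ∃ G, AnalyticOnNhd ℂ G (S δ ε) ∧ ∀ p ∈ S δ ε, g p = p.1 * G p := by
  refine ⟨Q g, ?_, Q_key hδ hε hg h0⟩
  intro p hp
  by_cases hp1 : p.1 = 0
  · exact Q_analytic_zero hg hp hp1
  · exact Q_analytic_ne hδ hε hg h0 hp hp1

lemma lemmaB (hδ : 0 < δ) (hε : 0 < ε) {b : ℂ} (hb : b ∈ Metric.ball (0:ℂ) ε) :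
    ∀ (k : ℕ) (g ψ : ℂ × ℂ → ℂ) (V : Set (ℂ × ℂ)),
      AnalyticOnNhd ℂ g (S δ ε) → IsOpen V → ((0:ℂ), b) ∈ V → V ⊆ S δ ε →
      ContinuousOn ψ V → (∀ q ∈ V, g q = q.1 ^ k * ψ q) →
      ∃ G, AnalyticOnNhd ℂ G (S δ ε) ∧ ∀ p ∈ S δ ε, g p = p.1 ^ k * G p := by
  intro k
  induction k with
  | zero =>
    intro g ψ V hg _ _ _ _ _
    exact ⟨g, hg, fun p _ => by simp⟩
  | succ k IH =>
    intro g ψ V hg hV hbV hVS hψ hgψ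
    have hslice_an : AnalyticOnNhd ℂ (fun z₂ : ℂ => g (0, z₂)) (Metric.ball (0:ℂ) ε) := by
      intro z₂ hz₂
      have hmem : ((0:ℂ), z₂) ∈ S δ ε := ⟨mem_ball_self hδ, hz₂⟩
      exact (hg _ hmem).comp ((analyticAt_const).prod (analyticAt_id))
    have hslice0 : ∀ z₂ ∈ Metric.ball (0:ℂ) ε, g (0, z₂) = 0 := by
      have hzero : Set.EqOn (fun z₂ : ℂ => g (0, z₂)) 0 (Metric.ball (0:ℂ) ε) := by
        apply hslice_an.eqOn_zero_of_preconnected_of_eventuallyEq_zero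
          (convex_ball _ _).isPreconnected hb
        have hVb : {z₂ : ℂ | ((0:ℂ), z₂) ∈ V} ∈ nhds b := by
          have hcnt : Continuous fun z₂ : ℂ => ((0:ℂ), z₂) := by fun_prop
          exact hcnt.continuousAt.preimage_mem_nhds (hV.mem_nhds hbV)
        filter_upwards [hVb] with z₂ hz₂
        have := hgψ _ hz₂
        simpa using this
      intro z₂ hz₂; exact hzero hz₂
    obtain ⟨G₁, hG₁an, hG₁⟩ := lemmaA hδ hε hg hslice0
    have hnew : ∀ q ∈ V, G₁ q = q.1 ^ k * ψ q := by
      intro q hq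
      rcases eq_or_ne q.1 0 with h0 | h0
      · set l := nhdsWithin q {x : ℂ × ℂ | x.1 ≠ 0} with hl
        have hclos : q ∈ closure {x : ℂ × ℂ | x.1 ≠ 0} := by
          rw [Metric.mem_closure_iff]
          intro r hr
          refine ⟨((r/2 : ℝ), q.2), ?_, ?_⟩
          · simp only [Set.mem_setOf_eq]
            exact_mod_cast (by positivity : (0:ℝ) < r/2).ne'
          · rw [Prod.dist_eq]
            rw [dist_self, dist_eq_norm, h0, zero_sub, norm_neg]
            rw [max_eq_left (norm_nonneg _)]
            simp only [Complex.norm_real, Real.norm_eq_abs]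
            rw [abs_of_pos (by positivity : (0:ℝ) < r/2)]
            linarith
        haveI : l.NeBot := mem_closure_iff_nhdsWithin_neBot.mp hclos
        have hGt : Filter.Tendsto G₁ l (nhds (G₁ q)) :=
          ((hG₁an q (hVS hq)).continuousAt).continuousWithinAt
        have hψt : Filter.Tendsto (fun x : ℂ × ℂ => x.1 ^ k * ψ x) l
            (nhds (q.1 ^ k * ψ q)) := by
          apply Filter.Tendsto.mono_left _ nhdsWithin_le_nhds
          exact (continuousAt_fst.pow k).mul (hψ.continuousAt (hV.mem_nhds hq))
        have heq : ∀ᶠ x in l, G₁ x = x.1 ^ k * ψ x := by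
          filter_upwards [nhdsWithin_le_nhds (hV.mem_nhds hq), self_mem_nhdsWithin]
            with x hxV hx1
          have h1 := hG₁ x (hVS hxV)
          have h2 := hgψ x hxV
          have h3 : x.1 * G₁ x = x.1 * (x.1 ^ k * ψ x) := by
            rw [← h1, h2]; ring
          exact mul_left_cancel₀ hx1 h3
        exact tendsto_nhds_unique (hGt.congr' heq) hψt
      · have h1 := hG₁ q (hVS hq)
        have h2 := hgψ q hq
        have h3 : q.1 * G₁ q = q.1 * (q.1 ^ k * ψ q) := by
          rw [← h1, h2]; ring
        exact mul_left_cancel₀ h0 h3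
    obtain ⟨G, hGan, hG⟩ := IH G₁ ψ V hG₁an hV hbV hVS hψ hnew
    refine ⟨G, hGan, fun p hp => ?_⟩
    rw [hG₁ p hp, hG p hp]; ring

end TangencyAux

end

open TangencyAux

/-- **Propagation of closed decompositions across a tangency point whose leaf is not a
common leaf.** For `w = g dz₁ dw₁` on the bidisc `D = Δ_ε × Δ_ε`, with `g` not identically
zero, `Dw₁` nowhere vanishing, and the leaf `{z₁ = 0}` not a common leaf
(`z₂ ↦ (∂w₁/∂z₂)(0,z₂)` not identically zero): if every point where `∂w₁/∂z₂ ≠ 0` has a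
neighborhood with `g = f(z₁)·h(w₁)`, then `(0,0)` has a neighborhood `W` carrying a closed
decomposition `g = f̂(z₁)·ĥ` with `dĥ ∧ dw₁ ≡ 0`. -/
theorem closed_decomposition_at_tangency_point
    (ε : ℝ) (hε : 0 < ε)
    (g w₁ : ℂ × ℂ → ℂ)
    (hg : AnalyticOnNhd ℂ g {p : ℂ × ℂ | ‖p.1‖ < ε ∧ ‖p.2‖ < ε})
    (hw₁ : AnalyticOnNhd ℂ w₁ {p : ℂ × ℂ | ‖p.1‖ < ε ∧ ‖p.2‖ < ε})
    (hg0 : ∃ p : ℂ × ℂ, ‖p.1‖ < ε ∧ ‖p.2‖ < ε ∧ g p ≠ 0)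
    (hDw₁ : ∀ p : ℂ × ℂ, ‖p.1‖ < ε → ‖p.2‖ < ε →
      fderiv ℂ w₁ p ≠ 0)
    (hnotcommon : ∃ b : ℂ, ‖b‖ < ε ∧ fderiv ℂ w₁ (0, b) (0, 1) ≠ 0)
    (hsplit : ∀ p : ℂ × ℂ, ‖p.1‖ < ε → ‖p.2‖ < ε →
      fderiv ℂ w₁ p (0, 1) ≠ 0 →
      ∃ V : Set (ℂ × ℂ), IsOpen V ∧ p ∈ V ∧
        V ⊆ {q : ℂ × ℂ | ‖q.1‖ < ε ∧ ‖q.2‖ < ε} ∧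
        ∃ f h : ℂ → ℂ,
          (∀ q ∈ V, AnalyticAt ℂ f q.1) ∧
          (∀ q ∈ V, AnalyticAt ℂ h (w₁ q)) ∧
          (∀ q ∈ V, g q = f q.1 * h (w₁ q))) :
    ∃ W : Set (ℂ × ℂ), IsOpen W ∧ ((0 : ℂ), (0 : ℂ)) ∈ W ∧
      W ⊆ {p : ℂ × ℂ | ‖p.1‖ < ε ∧ ‖p.2‖ < ε} ∧
      ∃ fh : ℂ → ℂ, ∃ hh : ℂ × ℂ → ℂ,
        (∀ q ∈ W, AnalyticAt ℂ fh q.1) ∧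
        AnalyticOnNhd ℂ hh W ∧
        (∀ q ∈ W, fderiv ℂ hh q (1, 0) * fderiv ℂ w₁ q (0, 1) =
          fderiv ℂ hh q (0, 1) * fderiv ℂ w₁ q (1, 0)) ∧
        (∀ q ∈ W, g q = fh q.1 * hh q) := by
  classical
  set D : Set (ℂ × ℂ) := {p : ℂ × ℂ | ‖p.1‖ < ε ∧ ‖p.2‖ < ε} with hD
  have hDS : D = S ε ε := by
    ext p; rw [memS]; exact Iff.rfl
  obtain ⟨b, hbε, hbw⟩ := hnotcommon
  have h0ε : ‖(0:ℂ)‖ < ε := by simpa using hε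
  obtain ⟨V, hVo, hbV, hVD, f, h, hVf, hVh, hVg⟩ := hsplit (0, b) h0ε hbε hbw
  have hf0 : AnalyticAt ℂ f 0 := hVf (0, b) hbV
  -- the order of f at 0 is finite
  have hford : analyticOrderAt f 0 ≠ ⊤ := by
    intro htop
    rw [analyticOrderAt_eq_top] at htop
    have hg0' : ∀ᶠ q : ℂ × ℂ in nhds ((0:ℂ), b), g q = 0 := by
      have h2 : ∀ᶠ q : ℂ × ℂ in nhds ((0:ℂ), b), f q.1 = 0 := by
        have hT : Filter.Tendsto (fun q : ℂ × ℂ => q.1) (nhds ((0:ℂ), b)) (nhds 0) :=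
          continuous_fst.tendsto ((0:ℂ), b)
        exact hT.eventually htop
      filter_upwards [hVo.mem_nhds hbV, h2] with q hqV hqf
      rw [hVg q hqV, hqf, zero_mul]
    obtain ⟨p, hp1, hp2, hpg⟩ := hg0
    have hDpre : IsPreconnected D := by
      rw [hDS]; exact ((convex_ball _ _).prod (convex_ball _ _)).isPreconnected
    have hbD : ((0:ℂ), b) ∈ D := ⟨h0ε, hbε⟩
    have := hg.eqOn_zero_of_preconnected_of_eventuallyEq_zero hDpre hbD hg0'
    exact hpg (this ⟨hp1, hp2⟩)
  set k : ℕ := (analyticOrderAt f 0).toNat with hk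
  have horder : analyticOrderAt f 0 = (k : ℕ∞) := (ENat.coe_toNat hford).symm
  obtain ⟨u, huan, hu0, hfu⟩ := hf0.analyticOrderAt_eq_natCast.mp horder
  -- choose δ
  have hev : ∀ᶠ z : ℂ in nhds 0, AnalyticAt ℂ f z ∧ (AnalyticAt ℂ u z ∧ u z ≠ 0) ∧
      f z = z ^ k * u z := by
    filter_upwards [hf0.eventually_analyticAt, huan.eventually_analyticAt,
      huan.continuousAt.eventually_ne hu0, hfu] with z h1 h2 h3 h4
    refine ⟨h1, ⟨h2, h3⟩, ?_⟩
    simpa [smul_eq_mul] using h4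
  obtain ⟨δ₀, hδ₀, hball⟩ := Metric.eventually_nhds_iff_ball.mp hev
  set δ : ℝ := min δ₀ ε with hδdef
  have hδ : 0 < δ := lt_min hδ₀ hε
  have hδδ₀ : δ ≤ δ₀ := min_le_left _ _
  have hδε : δ ≤ ε := min_le_right _ _
  have hWo : IsOpen (S δ ε) := isOpenS δ ε
  have hWD : S δ ε ⊆ D := by
    intro p hp
    rw [memS] at hp
    exact ⟨lt_of_lt_of_le hp.1 hδε, hp.2⟩
  have hballδ : ∀ z : ℂ, ‖z‖ < δ → AnalyticAt ℂ f z ∧ (AnalyticAt ℂ u z ∧ u z ≠ 0) ∧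
      f z = z ^ k * u z := by
    intro z hz
    apply hball
    rw [mem_ball_zero_iff]
    exact lt_of_lt_of_le hz hδδ₀
  have hbmem : b ∈ Metric.ball (0:ℂ) ε := by
    rw [mem_ball_zero_iff]; exact hbε
  have hbW : ((0:ℂ), b) ∈ S δ ε := ⟨mem_ball_self hδ, hbmem⟩
  -- apply lemma B
  have hgW : AnalyticOnNhd ℂ g (S δ ε) := fun p hp => hg p (hWD hp)
  set V' : Set (ℂ × ℂ) := V ∩ S δ ε with hV'
  have hV'o : IsOpen V' := hVo.inter hWo
  have hbV' : ((0:ℂ), b) ∈ V' := ⟨hbV, hbW⟩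
  set ψ : ℂ × ℂ → ℂ := fun q => u q.1 * h (w₁ q) with hψdef
  have habs : ∀ q : ℂ × ℂ, q ∈ S δ ε → ‖q.1‖ < δ := by
    intro q hq; exact (memS.mp hq).1
  have hψc : ContinuousOn ψ V' := by
    intro q hq
    have hq1 : ‖q.1‖ < δ := habs q hq.2
    have h1 : ContinuousAt (fun q : ℂ × ℂ => u q.1) q :=
      ((hballδ q.1 hq1).2.1.1.continuousAt).comp continuousAt_fst
    have h2 : ContinuousAt (fun q : ℂ × ℂ => h (w₁ q)) q :=
      ((hVh q hq.1).continuousAt).comp (hw₁ q (hVD hq.1)).continuousAt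
    exact (h1.mul h2).continuousWithinAt
  have hgψ : ∀ q ∈ V', g q = q.1 ^ k * ψ q := by
    intro q hq
    rw [hVg q hq.1, (hballδ q.1 (habs q hq.2)).2.2]
    show q.1 ^ k * u q.1 * h (w₁ q) = q.1 ^ k * (u q.1 * h (w₁ q))
    ring
  obtain ⟨G, hGan, hGval⟩ := lemmaB hδ hε hbmem k g ψ V' hgW hV'o hbV' Set.inter_subset_right
    hψc hgψ
  -- define the decomposition
  set hh : ℂ × ℂ → ℂ := fun q => G q / u q.1 with hhdef
  have hhan : AnalyticOnNhd ℂ hh (S δ ε) := by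
    intro q hq
    have hq1 : ‖q.1‖ < δ := habs q hq
    exact (hGan q hq).div ((hballδ q.1 hq1).2.1.1.comp analyticAt_fst)
      (hballδ q.1 hq1).2.1.2
  have hprod : ∀ q ∈ S δ ε, g q = f q.1 * hh q := by
    intro q hq
    have hq1 : ‖q.1‖ < δ := habs q hq
    have hu : u q.1 ≠ 0 := (hballδ q.1 hq1).2.1.2
    rw [hGval q hq, (hballδ q.1 hq1).2.2]
    show q.1 ^ k * G q = q.1 ^ k * u q.1 * (G q / u q.1)
    field_simp
  -- the PDE
  set O : Set (ℂ × ℂ) := V' ∩ {x : ℂ × ℂ | x.1 ≠ 0} with hO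
  have hOopen : IsOpen O := hV'o.inter (isOpen_ne_fun continuous_fst continuous_const)
  have hOW : O ⊆ S δ ε := fun x hx => hx.1.2
  have hhwO : ∀ x ∈ O, hh x = h (w₁ x) := by
    rintro x ⟨⟨hxV, hxS⟩, hx1⟩
    have hq1 : ‖x.1‖ < δ := habs x hxS
    have hux : u x.1 ≠ 0 := (hballδ x.1 hq1).2.1.2
    have hxk : x.1 ^ k ≠ 0 := pow_ne_zero _ hx1
    have e1 : g x = x.1 ^ k * G x := hGval x hxS
    have e3 : f x.1 = x.1 ^ k * u x.1 := (hballδ x.1 hq1).2.2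
    have e4 : x.1 ^ k * G x = x.1 ^ k * (u x.1 * h (w₁ x)) := by
      rw [← e1, hVg x hxV, e3]; ring
    have hGx : G x = u x.1 * h (w₁ x) := mul_left_cancel₀ hxk e4
    show G x / u x.1 = h (w₁ x)
    rw [hGx]
    field_simp
  set P : ℂ × ℂ → ℂ := fun q => fderiv ℂ hh q (1, 0) * fderiv ℂ w₁ q (0, 1) -
    fderiv ℂ hh q (0, 1) * fderiv ℂ w₁ q (1, 0) with hPdef
  have hPan : AnalyticOnNhd ℂ P (S δ ε) := by
    intro q hq
    have h1 : AnalyticAt ℂ (fderiv ℂ hh) q := (hhan q hq).fderiv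
    have h2 : AnalyticAt ℂ (fderiv ℂ w₁) q := (hw₁ q (hWD hq)).fderiv
    exact ((((ContinuousLinearMap.apply ℂ ℂ ((1:ℂ), (0:ℂ))).analyticAt _).comp h1).mul
      (((ContinuousLinearMap.apply ℂ ℂ ((0:ℂ), (1:ℂ))).analyticAt _).comp h2)).sub
      ((((ContinuousLinearMap.apply ℂ ℂ ((0:ℂ), (1:ℂ))).analyticAt _).comp h1).mul
      (((ContinuousLinearMap.apply ℂ ℂ ((1:ℂ), (0:ℂ))).analyticAt _).comp h2))
  have hPO : ∀ x ∈ O, P x = 0 := by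
    intro x hxO
    have hhev : hh =ᶠ[nhds x] fun y => h (w₁ y) := by
      filter_upwards [hOopen.mem_nhds hxO] with y hy
      exact hhwO y hy
    have hfd : fderiv ℂ hh x = fderiv ℂ (fun y => h (w₁ y)) x := hhev.fderiv_eq
    have hdh : DifferentiableAt ℂ h (w₁ x) := (hVh x hxO.1.1).differentiableAt
    have hdw : DifferentiableAt ℂ w₁ x := (hw₁ x (hVD hxO.1.1)).differentiableAt
    have hcomp : fderiv ℂ (fun y => h (w₁ y)) x = (fderiv ℂ h (w₁ x)).comp (fderiv ℂ w₁ x) :=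
      fderiv_comp x hdh hdw
    have happly : ∀ v : ℂ × ℂ, fderiv ℂ hh x v = fderiv ℂ w₁ x v * deriv h (w₁ x) := by
      intro v
      rw [hfd, hcomp]
      rw [ContinuousLinearMap.comp_apply]
      have hz : ∀ z : ℂ, fderiv ℂ h (w₁ x) z = z * deriv h (w₁ x) := by
        intro z
        have h1 : fderiv ℂ h (w₁ x) z = z • fderiv ℂ h (w₁ x) 1 := by
          rw [← ContinuousLinearMap.map_smul, smul_eq_mul, mul_one]
        rw [h1, fderiv_apply_one_eq_deriv, smul_eq_mul]
      exact hz _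
    show fderiv ℂ hh x (1, 0) * fderiv ℂ w₁ x (0, 1) -
      fderiv ℂ hh x (0, 1) * fderiv ℂ w₁ x (1, 0) = 0
    rw [happly (1, 0), happly (0, 1)]
    ring
  -- a point of O
  obtain ⟨ρ₀, hρ₀, hρball⟩ := Metric.isOpen_iff.mp hV'o ((0:ℂ), b) hbV'
  set q₀ : ℂ × ℂ := (((ρ₀/2 : ℝ) : ℂ), b) with hq₀def
  have hq₀V' : q₀ ∈ V' := by
    apply hρball
    rw [Metric.mem_ball, Prod.dist_eq]
    have : dist ((ρ₀/2 : ℝ) : ℂ) (0:ℂ) = ρ₀/2 := by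
      rw [dist_eq_norm, sub_zero, Complex.norm_real, Real.norm_eq_abs,
        abs_of_pos (by positivity)]
    rw [this, dist_self]
    rw [max_eq_left (by positivity)]
    linarith
  have hq₀O : q₀ ∈ O := by
    refine ⟨hq₀V', ?_⟩
    show ((ρ₀/2 : ℝ) : ℂ) ≠ 0
    exact_mod_cast (by positivity : (0:ℝ) < ρ₀/2).ne'
  have hWpre : IsPreconnected (S δ ε) :=
    ((convex_ball _ _).prod (convex_ball _ _)).isPreconnected
  have hPev : P =ᶠ[nhds q₀] 0 := by
    filter_upwards [hOopen.mem_nhds hq₀O] with x hx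
    exact hPO x hx
  have hPzero : Set.EqOn P 0 (S δ ε) :=
    hPan.eqOn_zero_of_preconnected_of_eventuallyEq_zero hWpre (hOW hq₀O) hPev
  -- conclude
  refine ⟨S δ ε, hWo, ⟨mem_ball_self hδ, mem_ball_self hε⟩, hWD, f, hh, ?_, hhan, ?_, ?_⟩
  · intro q hq
    exact (hballδ q.1 (habs q hq)).1
  · intro q hq
    have := hPzero hq
    simpa [hPdef, sub_eq_zero] using this
  · exact hprod
end

section
/- Let ε > 0, let m be a natural number, let D = Δ_ε × Δ_ε ⊆ ℂ², let g be an analytic function on D, and set π(z₁,z₂) = z₁·(1+z₁^m·z₂). Suppose there exist b with |b| < ε, an open neighborhood V ⊆ D of (0,b), and one-variable analytic functions f and h such that g(z₁,z₂) = f(z₁)·h(π(z₁,z₂)) for all (z₁,z₂) ∈ V. Then there exist an open neighborhood W of (0,0) and one-variable analytic functions f̂ and ĥ such that g(z₁,z₂) = f̂(z₁)·ĥ(π(z₁,z₂)) for all (z₁,z₂) ∈ W. -/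
open Complex

/-- **Propagation of closed decompositions along a common leaf.**
For `g` analytic on the bidisc `D = Δ_ε × Δ_ε` and `π(z₁,z₂) = z₁(1+z₁^m z₂)`:
if `g = f(z₁)·h(π(z₁,z₂))` on a neighborhood of some point `(0,b)` of the common leaf
`{z₁ = 0}`, then `g = f̂(z₁)·ĥ(π(z₁,z₂))` on a neighborhood of `(0,0)`. -/
theorem closed_decomposition_propagates_along_common_leaf
    (ε : ℝ) (hε : 0 < ε) (m : ℕ)
    (g : ℂ × ℂ → ℂ)
    (hg : AnalyticOnNhd ℂ g {p : ℂ × ℂ | ‖p.1‖ < ε ∧ ‖p.2‖ < ε})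
    (hyp : ∃ b : ℂ, ‖b‖ < ε ∧
      ∃ V : Set (ℂ × ℂ), IsOpen V ∧ ((0 : ℂ), b) ∈ V ∧
        V ⊆ {p : ℂ × ℂ | ‖p.1‖ < ε ∧ ‖p.2‖ < ε} ∧
        ∃ f h : ℂ → ℂ,
          (∀ p ∈ V, AnalyticAt ℂ f p.1) ∧
          (∀ p ∈ V, AnalyticAt ℂ h (p.1 * (1 + p.1 ^ m * p.2))) ∧
          (∀ p ∈ V, g p = f p.1 * h (p.1 * (1 + p.1 ^ m * p.2)))) :
    ∃ W : Set (ℂ × ℂ), IsOpen W ∧ ((0 : ℂ), (0 : ℂ)) ∈ W ∧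
      W ⊆ {p : ℂ × ℂ | ‖p.1‖ < ε ∧ ‖p.2‖ < ε} ∧
      ∃ fh hh : ℂ → ℂ,
        (∀ p ∈ W, AnalyticAt ℂ fh p.1) ∧
        (∀ p ∈ W, AnalyticAt ℂ hh (p.1 * (1 + p.1 ^ m * p.2))) ∧
        (∀ p ∈ W, g p = fh p.1 * hh (p.1 * (1 + p.1 ^ m * p.2))) := by
  obtain ⟨b, hb, V, hVopen, hbV, hVD, f, h, hfV, hhV, heqV⟩ := hyp
  -- f is analytic at 0 and h is analytic at 0 = π(0,b)
  have hf0 : AnalyticAt ℂ f (0 : ℂ) := hfV _ hbV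
  have hh0 : AnalyticAt ℂ h (0 : ℂ) := by
    have := hhV _ hbV
    simpa using this
  -- get radii on which f, h are analytic
  obtain ⟨r₁, hr₁pos, hr₁⟩ : ∃ r > 0, ∀ y : ℂ, ‖y‖ < r → AnalyticAt ℂ f y := by
    have := hf0.eventually_analyticAt
    rw [Metric.eventually_nhds_iff] at this
    obtain ⟨r, hr, hball⟩ := this
    exact ⟨r, hr, fun y hy => hball (by simpa [Complex.dist_eq] using hy)⟩
  obtain ⟨r₂, hr₂pos, hr₂⟩ : ∃ r > 0, ∀ y : ℂ, ‖y‖ < r → AnalyticAt ℂ h y := by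
    have := hh0.eventually_analyticAt
    rw [Metric.eventually_nhds_iff] at this
    obtain ⟨r, hr, hball⟩ := this
    exact ⟨r, hr, fun y hy => hball (by simpa [Complex.dist_eq] using hy)⟩
  set δ : ℝ := min (min ε 1) (min r₁ (r₂ / (1 + ε))) with hδdef
  have hδpos : 0 < δ := by
    have : 0 < r₂ / (1 + ε) := div_pos hr₂pos (by linarith)
    simp only [hδdef, lt_min_iff]
    exact ⟨⟨hε, one_pos⟩, hr₁pos, this⟩
  have hδε : δ ≤ ε := le_trans (min_le_left _ _) (min_le_left _ _)
  have hδ1 : δ ≤ 1 := le_trans (min_le_left _ _) (min_le_right _ _)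
  have hδr₁ : δ ≤ r₁ := le_trans (min_le_right _ _) (min_le_left _ _)
  have hδr₂ : δ * (1 + ε) ≤ r₂ := by
    have hle : δ ≤ r₂ / (1 + ε) := le_trans (min_le_right _ _) (min_le_right _ _)
    have h1ε : (0:ℝ) < 1 + ε := by linarith
    calc δ * (1 + ε) ≤ (r₂ / (1 + ε)) * (1 + ε) := by
          exact mul_le_mul_of_nonneg_right hle (le_of_lt h1ε)
      _ = r₂ := by field_simp
  set S : Set (ℂ × ℂ) := {p : ℂ × ℂ | ‖p.1‖ < δ ∧ ‖p.2‖ < ε} with hSdef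
  -- the key bound : for p ∈ S, |π p| < r₂
  have hπbound : ∀ p : ℂ × ℂ, p ∈ S → ‖p.1 * (1 + p.1 ^ m * p.2)‖ < r₂ := by
    rintro p ⟨h1, h2⟩
    have habs1 : ‖1 + p.1 ^ m * p.2‖ ≤ 1 + ε := by
      calc ‖1 + p.1 ^ m * p.2‖
          ≤ ‖(1:ℂ)‖ + ‖p.1 ^ m * p.2‖ := norm_add_le _ _
        _ = 1 + ‖p.1‖ ^ m * ‖p.2‖ := by
            simp [map_mul, map_pow]
        _ ≤ 1 + 1 * ε := by
            have hp1 : ‖p.1‖ ^ m ≤ 1 :=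
              pow_le_one₀ (norm_nonneg _) (le_of_lt (lt_of_lt_of_le h1 hδ1))
            have : ‖p.1‖ ^ m * ‖p.2‖ ≤ 1 * ε :=
              mul_le_mul hp1 (le_of_lt h2) (norm_nonneg _) one_pos.le
            linarith
        _ = 1 + ε := by ring
    calc ‖p.1 * (1 + p.1 ^ m * p.2)‖
        = ‖p.1‖ * ‖1 + p.1 ^ m * p.2‖ := norm_mul _ _
      _ ≤ ‖p.1‖ * (1 + ε) :=
          mul_le_mul_of_nonneg_left habs1 (norm_nonneg _)
      _ < δ * (1 + ε) := by
          have : (0:ℝ) < 1 + ε := by linarith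
          exact mul_lt_mul_of_pos_right h1 this
      _ ≤ r₂ := hδr₂
  have hSsubD : S ⊆ {p : ℂ × ℂ | ‖p.1‖ < ε ∧ ‖p.2‖ < ε} :=
    fun p hp => ⟨lt_of_lt_of_le hp.1 hδε, hp.2⟩
  have hSopen : IsOpen S := by
    apply IsOpen.inter
    · exact isOpen_lt (continuous_norm.comp continuous_fst) continuous_const
    · exact isOpen_lt (continuous_norm.comp continuous_snd) continuous_const
  have hSprod : S = (Metric.ball (0:ℂ) δ) ×ˢ (Metric.ball (0:ℂ) ε) := by
    ext p
    simp [hSdef, Set.mem_prod, Metric.mem_ball, Complex.dist_eq]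
  have hSpre : IsPreconnected S := by
    rw [hSprod]
    exact ((convex_ball (0:ℂ) δ).prod (convex_ball (0:ℂ) ε)).isPreconnected
  -- π is analytic
  have hπan : ∀ p : ℂ × ℂ, AnalyticAt ℂ (fun q : ℂ × ℂ => q.1 * (1 + q.1 ^ m * q.2)) p := by
    intro p
    exact analyticAt_fst.mul (analyticAt_const.add ((analyticAt_fst.pow m).mul analyticAt_snd))
  -- F := f(z₁) h(π) is analytic on S
  set F : ℂ × ℂ → ℂ := fun p => f p.1 * h (p.1 * (1 + p.1 ^ m * p.2)) with hFdef
  have hFan : AnalyticOnNhd ℂ F S := by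
    intro p hp
    have hf : AnalyticAt ℂ f p.1 := hr₁ p.1 (lt_of_lt_of_le hp.1 hδr₁)
    have hh : AnalyticAt ℂ h (p.1 * (1 + p.1 ^ m * p.2)) := hr₂ _ (hπbound p hp)
    have hcomp : AnalyticAt ℂ ((fun w => h w) ∘ fun q : ℂ × ℂ => q.1 * (1 + q.1 ^ m * q.2)) p :=
      AnalyticAt.comp hh (hπan p)
    have hcomp' : AnalyticAt ℂ (fun q : ℂ × ℂ => h (q.1 * (1 + q.1 ^ m * q.2))) p := hcomp
    exact (hf.comp analyticAt_fst).mul hcomp'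
  have hgan : AnalyticOnNhd ℂ g S := fun p hp => hg p (hSsubD hp)
  -- (0,b) ∈ S and g =ᶠ F near (0,b)
  have hbS : ((0:ℂ), b) ∈ S := by
    constructor
    · simpa using hδpos
    · simpa using hb
  have hfg : g =ᶠ[nhds ((0:ℂ), b)] F := by
    filter_upwards [hVopen.mem_nhds hbV] with p hp
    exact heqV p hp
  have hEq : Set.EqOn g F S :=
    hgan.eqOn_of_preconnected_of_eventuallyEq hFan hSpre hbS hfg
  refine ⟨S, hSopen, ?_, hSsubD, f, h, ?_, ?_, ?_⟩
  · exact ⟨by simpa using hδpos, by simpa using hε⟩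
  · intro p hp
    exact hr₁ p.1 (lt_of_lt_of_le hp.1 hδr₁)
  · intro p hp
    exact hr₂ _ (hπbound p hp)
  · intro p hp
    exact hEq hp
end

section
/- Let r, s > 0 and let g be an analytic nowhere-vanishing function on the polydisc D = Δ_r × Δ_s ⊆ ℂ². Then g satisfies the differential equation g·(∂²g/∂z₁∂z₂) = (∂g/∂z₁)·(∂g/∂z₂) at every point of D (equivalently, ∂²(log g)/∂z₁∂z₂ = 0) if and only if there exist analytic functions f₁ on Δ_r and f₂ on Δ_s such that g(z₁,z₂) = f₁(z₁)·f₂(z₂) for all (z₁,z₂) ∈ D. -/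
open Complex

/-- Slice derivative in the first variable. -/
private lemma slice1 {h : ℂ × ℂ → ℂ} {p : ℂ × ℂ} (hd : DifferentiableAt ℂ h p) :
    HasDerivAt (fun z => h (z, p.2)) (fderiv ℂ h p (1, 0)) p.1 := by
  have h1 : HasFDerivAt (fun z : ℂ => (z, p.2))
      ((ContinuousLinearMap.id ℂ ℂ).prod 0) p.1 :=
    (hasFDerivAt_id _).prodMk (hasFDerivAt_const _ _)
  have h2 : HasFDerivAt h (fderiv ℂ h p) (p.1, p.2) := by
    rw [Prod.mk.eta]; exact hd.hasFDerivAt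
  have h3 := (h2.comp p.1 h1).hasDerivAt
  simpa [Function.comp_def] using h3

/-- Slice derivative in the second variable. -/
private lemma slice2 {h : ℂ × ℂ → ℂ} {p : ℂ × ℂ} (hd : DifferentiableAt ℂ h p) :
    HasDerivAt (fun z => h (p.1, z)) (fderiv ℂ h p (0, 1)) p.2 := by
  have h1 : HasFDerivAt (fun z : ℂ => (p.1, z))
      ((0 : ℂ →L[ℂ] ℂ).prod (ContinuousLinearMap.id ℂ ℂ)) p.2 :=
    (hasFDerivAt_const _ _).prodMk (hasFDerivAt_id _)
  have h2 : HasFDerivAt h (fderiv ℂ h p) (p.1, p.2) := by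
    rw [Prod.mk.eta]; exact hd.hasFDerivAt
  have h3 := (h2.comp p.2 h1).hasDerivAt
  simpa [Function.comp_def] using h3

/-- A function with vanishing derivative on a disc is constant there. -/
private lemma const_of_hasDerivAt_zero {f : ℂ → ℂ} {R : ℝ}
    (hf : ∀ z : ℂ, ‖z‖ < R → HasDerivAt f 0 z) {w : ℂ}
    (hw : ‖w‖ < R) (h0 : (0 : ℝ) < R) : f w = f 0 := by
  have hmem : ∀ z : ℂ, ‖z‖ < R → z ∈ Metric.ball (0 : ℂ) R := by
    intro z hz
    simpa [Metric.mem_ball, Complex.dist_eq] using hz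
  have hball : ∀ x ∈ Metric.ball (0 : ℂ) R,
      HasFDerivWithinAt f (0 : ℂ →L[ℂ] ℂ) (Metric.ball (0 : ℂ) R) x := by
    intro x hx
    have hx' : ‖x‖ < R := by
      simpa [Metric.mem_ball, Complex.dist_eq] using hx
    have h1 := (hf x hx').hasFDerivAt
    have h2 : ContinuousLinearMap.toSpanSingleton ℂ (0 : ℂ) = 0 := by
      ext; simp
    rw [h2] at h1
    exact h1.hasFDerivWithinAt
  have hbd : ∀ x ∈ Metric.ball (0 : ℂ) R, ‖(0 : ℂ →L[ℂ] ℂ)‖ ≤ 0 := by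
    intro x _; simp
  have := (convex_ball (0 : ℂ) R).norm_image_sub_le_of_norm_hasFDerivWithin_le
    hball hbd (hmem 0 (by simpa using h0)) (hmem w hw)
  simp only [zero_mul, norm_le_zero_iff, sub_eq_zero] at this
  exact this

/-- **Vanishing of the complexified Gaussian curvature characterizes splitting of
the coefficient.** A nowhere-vanishing analytic function `g` on a polydisc
`Δ_r × Δ_s` satisfies `g·∂²g/∂z₁∂z₂ = (∂g/∂z₁)·(∂g/∂z₂)` (i.e. `∂²(log g)/∂z₁∂z₂ = 0`)
if and only if `g(z₁,z₂) = f₁(z₁)·f₂(z₂)` for analytic functions `f₁`, `f₂` on the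
respective discs. -/
theorem curvature_zero_iff_product
    (r s : ℝ) (hr : 0 < r) (hs : 0 < s)
    (g : ℂ × ℂ → ℂ)
    (hg : AnalyticOnNhd ℂ g {p : ℂ × ℂ | ‖p.1‖ < r ∧ ‖p.2‖ < s})
    (hg0 : ∀ p : ℂ × ℂ, ‖p.1‖ < r → ‖p.2‖ < s → g p ≠ 0) :
    (∀ p : ℂ × ℂ, ‖p.1‖ < r → ‖p.2‖ < s →
        g p * fderiv ℂ (fun q : ℂ × ℂ => fderiv ℂ g q (1, 0)) p (0, 1) =
          fderiv ℂ g p (1, 0) * fderiv ℂ g p (0, 1)) ↔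
    (∃ f₁ f₂ : ℂ → ℂ,
        AnalyticOnNhd ℂ f₁ {z : ℂ | ‖z‖ < r} ∧
        AnalyticOnNhd ℂ f₂ {z : ℂ | ‖z‖ < s} ∧
        ∀ p : ℂ × ℂ, ‖p.1‖ < r → ‖p.2‖ < s →
          g p = f₁ p.1 * f₂ p.2) := by
  have opD : IsOpen {p : ℂ × ℂ | ‖p.1‖ < r ∧ ‖p.2‖ < s} := by
    have h1 : IsOpen {p : ℂ × ℂ | ‖p.1‖ < r} :=
      isOpen_lt (continuous_norm.comp continuous_fst) continuous_const
    have h2 : IsOpen {p : ℂ × ℂ | ‖p.2‖ < s} :=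
      isOpen_lt (continuous_norm.comp continuous_snd) continuous_const
    exact h1.inter h2
  have hgd : ∀ p : ℂ × ℂ, ‖p.1‖ < r → ‖p.2‖ < s →
      DifferentiableAt ℂ g p := fun p h1 h2 => (hg p ⟨h1, h2⟩).differentiableAt
  constructor
  · -- forward direction
    intro hpde
    set G : ℂ × ℂ → ℂ := fun q => fderiv ℂ g q (1, 0) with hGdef
    have hGa : AnalyticOnNhd ℂ G {p : ℂ × ℂ | ‖p.1‖ < r ∧ ‖p.2‖ < s} := by
      intro p hp
      exact ((ContinuousLinearMap.apply ℂ ℂ ((1, 0) : ℂ × ℂ)).analyticAt _).comp (hg.fderiv p hp)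
    have hGd : ∀ p : ℂ × ℂ, ‖p.1‖ < r → ‖p.2‖ < s →
        DifferentiableAt ℂ G p := fun p h1 h2 => (hGa p ⟨h1, h2⟩).differentiableAt
    -- the logarithmic derivative in the first variable is independent of z₂
    have keyH : ∀ z₁ z₂ : ℂ, ‖z₁‖ < r → ‖z₂‖ < s →
        G (z₁, z₂) / g (z₁, z₂) = G (z₁, 0) / g (z₁, 0) := by
      intro z₁ z₂ h1 h2
      have hder : ∀ z : ℂ, ‖z‖ < s →
          HasDerivAt (fun w => G (z₁, w) / g (z₁, w)) 0 z := by
        intro z hz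
        have dG : HasDerivAt (fun w => G (z₁, w)) (fderiv ℂ G (z₁, z) (0, 1)) z :=
          slice2 (hGd (z₁, z) h1 hz)
        have dg' : HasDerivAt (fun w => g (z₁, w)) (fderiv ℂ g (z₁, z) (0, 1)) z :=
          slice2 (hgd (z₁, z) h1 hz)
        have hne : g (z₁, z) ≠ 0 := hg0 (z₁, z) h1 hz
        have hdiv := dG.div dg' hne
        have hp := hpde (z₁, z) h1 hz
        have hnum : (fderiv ℂ G (z₁, z) (0, 1) * g (z₁, z) -
            G (z₁, z) * fderiv ℂ g (z₁, z) (0, 1)) / g (z₁, z) ^ 2 = 0 := by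
          rw [show fderiv ℂ G (z₁, z) (0, 1) * g (z₁, z) -
              G (z₁, z) * fderiv ℂ g (z₁, z) (0, 1) = 0 by linear_combination hp]
          simp
        rwa [hnum] at hdiv
      exact const_of_hasDerivAt_zero hder h2 hs
    -- g(z₁,z₂)·g(0,0) = g(z₁,0)·g(0,z₂)
    have habs0s : ‖(0 : ℂ)‖ < s := by simpa using hs
    have habs0r : ‖(0 : ℂ)‖ < r := by simpa using hr
    have key2 : ∀ z₁ z₂ : ℂ, ‖z₁‖ < r → ‖z₂‖ < s →
        g (z₁, z₂) = g (z₁, 0) * (g (0, z₂) * (g (0, 0))⁻¹) := by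
      intro z₁ z₂ h1 h2
      have hder : ∀ z : ℂ, ‖z‖ < r →
          HasDerivAt (fun w => g (w, z₂) / g (w, 0)) 0 z := by
        intro z hz
        have d1 : HasDerivAt (fun w => g (w, z₂)) (G (z, z₂)) z :=
          slice1 (hgd (z, z₂) hz h2)
        have d2 : HasDerivAt (fun w => g (w, 0)) (G (z, 0)) z :=
          slice1 (hgd (z, 0) hz habs0s)
        have hne : g (z, 0) ≠ 0 := hg0 (z, 0) hz habs0s
        have hne' : g (z, z₂) ≠ 0 := hg0 (z, z₂) hz h2
        have hdiv := d1.div d2 hne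
        have hH := keyH z z₂ hz h2
        rw [div_eq_div_iff hne' hne] at hH
        have hnum : (G (z, z₂) * g (z, 0) - g (z, z₂) * G (z, 0)) / g (z, 0) ^ 2 = 0 := by
          rw [show G (z, z₂) * g (z, 0) - g (z, z₂) * G (z, 0) = 0 by
            linear_combination hH]
          simp
        rwa [hnum] at hdiv
      have hc := const_of_hasDerivAt_zero hder h1 hr
      have hne0 : g (0, 0) ≠ 0 := hg0 (0, 0) habs0r habs0s
      have hnez : g (z₁, 0) ≠ 0 := hg0 (z₁, 0) h1 habs0s
      rw [div_eq_div_iff hnez hne0] at hc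
      have hstep : g (z₁, 0) * (g (0, z₂) * (g (0, 0))⁻¹) =
          (g (z₁, z₂) * g (0, 0)) * (g (0, 0))⁻¹ := by rw [hc]; ring
      rw [hstep, mul_assoc, mul_inv_cancel₀ hne0, mul_one]
    refine ⟨fun z => g (z, 0), fun z => g (0, z) * (g (0, 0))⁻¹, ?_, ?_, ?_⟩
    · intro z hz
      have h := AnalyticAt.comp (f := fun w : ℂ => (w, (0 : ℂ)))
        (hg (z, 0) ⟨hz, habs0s⟩) (analyticAt_id.prod analyticAt_const)
      exact h
    · intro z hz
      have h := AnalyticAt.comp (f := fun w : ℂ => ((0 : ℂ), w))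
        (hg (0, z) ⟨habs0r, hz⟩) (analyticAt_const.prod analyticAt_id)
      exact h.mul analyticAt_const
    · intro p h1 h2
      have := key2 p.1 p.2 h1 h2
      simpa using this
  · -- backward direction
    rintro ⟨f₁, f₂, hf₁, hf₂, hfg⟩
    intro p h1 h2
    have hpD : p ∈ {p : ℂ × ℂ | ‖p.1‖ < r ∧ ‖p.2‖ < s} := ⟨h1, h2⟩
    have hev : ∀ q : ℂ × ℂ, q ∈ {p : ℂ × ℂ | ‖p.1‖ < r ∧ ‖p.2‖ < s} →
        g =ᶠ[nhds q] fun q' => f₁ q'.1 * f₂ q'.2 := by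
      intro q hq
      exact Filter.eventuallyEq_of_mem (opD.mem_nhds hq) (fun x hx => hfg x hx.1 hx.2)
    have hprodd : ∀ q : ℂ × ℂ, ‖q.1‖ < r → ‖q.2‖ < s →
        DifferentiableAt ℂ (fun q' : ℂ × ℂ => f₁ q'.1 * f₂ q'.2) q := by
      intro q hq1 hq2
      exact (((hf₁ q.1 hq1).differentiableAt.comp q differentiableAt_fst).mul
        (((hf₂ q.2 hq2).differentiableAt.comp q differentiableAt_snd)))
    -- first partials on D
    have hd1 : ∀ q : ℂ × ℂ, ‖q.1‖ < r → ‖q.2‖ < s →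
        fderiv ℂ g q (1, 0) = deriv f₁ q.1 * f₂ q.2 := by
      intro q hq1 hq2
      have heq : fderiv ℂ g q = fderiv ℂ (fun q' : ℂ × ℂ => f₁ q'.1 * f₂ q'.2) q :=
        (hev q ⟨hq1, hq2⟩).fderiv_eq
      rw [heq]
      have hA : HasDerivAt (fun z => f₁ z * f₂ q.2)
          (fderiv ℂ (fun q' : ℂ × ℂ => f₁ q'.1 * f₂ q'.2) q (1, 0)) q.1 :=
        slice1 (hprodd q hq1 hq2)
      have hB : HasDerivAt (fun z => f₁ z * f₂ q.2) (deriv f₁ q.1 * f₂ q.2) q.1 :=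
        ((hf₁ q.1 hq1).differentiableAt.hasDerivAt).mul_const _
      exact hA.unique hB
    have hd2 : fderiv ℂ g p (0, 1) = f₁ p.1 * deriv f₂ p.2 := by
      have heq : fderiv ℂ g p = fderiv ℂ (fun q' : ℂ × ℂ => f₁ q'.1 * f₂ q'.2) p :=
        (hev p hpD).fderiv_eq
      rw [heq]
      have hA : HasDerivAt (fun z => f₁ p.1 * f₂ z)
          (fderiv ℂ (fun q' : ℂ × ℂ => f₁ q'.1 * f₂ q'.2) p (0, 1)) p.2 :=
        slice2 (hprodd p h1 h2)
      have hB : HasDerivAt (fun z => f₁ p.1 * f₂ z) (f₁ p.1 * deriv f₂ p.2) p.2 :=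
        ((hf₂ p.2 h2).differentiableAt.hasDerivAt).const_mul _
      exact hA.unique hB
    -- mixed second partial
    have hmix : fderiv ℂ (fun q : ℂ × ℂ => fderiv ℂ g q (1, 0)) p (0, 1) =
        deriv f₁ p.1 * deriv f₂ p.2 := by
      have hev2 : (fun q : ℂ × ℂ => fderiv ℂ g q (1, 0)) =ᶠ[nhds p]
          fun q => deriv f₁ q.1 * f₂ q.2 := by
        refine Filter.eventuallyEq_of_mem (opD.mem_nhds hpD) ?_
        intro x hx
        exact hd1 x hx.1 hx.2
      rw [hev2.fderiv_eq]
      have hf₁' : AnalyticOnNhd ℂ (deriv f₁) {z : ℂ | ‖z‖ < r} := hf₁.deriv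
      have hdd : DifferentiableAt ℂ (fun q : ℂ × ℂ => deriv f₁ q.1 * f₂ q.2) p :=
        (((hf₁' p.1 h1).differentiableAt.comp p differentiableAt_fst).mul
          (((hf₂ p.2 h2).differentiableAt.comp p differentiableAt_snd)))
      have hA : HasDerivAt (fun z => deriv f₁ p.1 * f₂ z)
          (fderiv ℂ (fun q : ℂ × ℂ => deriv f₁ q.1 * f₂ q.2) p (0, 1)) p.2 :=
        slice2 hdd
      have hB : HasDerivAt (fun z => deriv f₁ p.1 * f₂ z)
          (deriv f₁ p.1 * deriv f₂ p.2) p.2 :=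
        ((hf₂ p.2 h2).differentiableAt.hasDerivAt).const_mul _
      exact hA.unique hB
    rw [hmix, hd1 p h1 h2, hd2, hfg p h1 h2]
    ring
end

section
/- Let U ⊆ ℂⁿ be a connected open set and let μ₁,…,μ_m and η₁,…,η_m be closed holomorphic 1-forms on U such that: (i) μ₁⊙⋯⊙μ_m = η₁⊙⋯⊙η_m on U; (ii) ηᵢ ∧ μᵢ ≡ 0 on U for each i = 1,…,m; and (iii) for every nonempty connected open subset V ⊆ U, the only analytic functions f₁,…,f_m on V satisfying Σᵢ fᵢ·μᵢ = 0 on V and dfᵢ ∧ μᵢ ≡ 0 on V for all i are f₁ = ⋯ = f_m = 0. Then there exist nonzero constants c₁,…,c_m ∈ ℂ with c₁·c₂·⋯·c_m = 1 such that ηᵢ = cᵢ·μᵢ on U for each i. -/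
open Complex



namespace CDUaux

variable {E : Type*} [NormedAddCommGroup E] [NormedSpace ℂ E]

/-- If `ψ ∧ φ = 0` and `φ w ≠ 0` then `ψ = (ψ w / φ w) • φ`. -/
lemma prop_of_wedge {ψ φ : E →L[ℂ] ℂ} (h : ∀ u v, ψ u * φ v = ψ v * φ u) {w : E}
    (hw : φ w ≠ 0) : ψ = (ψ w / φ w) • φ := by
  ext u
  have h1 := h u w
  simp only [ContinuousLinearMap.coe_smul', Pi.smul_apply, smul_eq_mul]
  field_simp
  linear_combination h1

open Classical in
noncomputable def ratio (ψ φ : E →L[ℂ] ℂ) : ℂ :=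
  if h : ∃ v, φ v ≠ 0 then ψ h.choose / φ h.choose else 0

lemma ratio_spec {ψ φ : E →L[ℂ] ℂ} (h : ∀ u v, ψ u * φ v = ψ v * φ u) (hφ : φ ≠ 0) :
    ψ = ratio ψ φ • φ := by
  have hex : ∃ v, φ v ≠ 0 := by
    by_contra hc
    push_neg at hc
    exact hφ (ContinuousLinearMap.ext fun v => by simpa using hc v)
  rw [ratio]
  rw [dif_pos hex]
  exact prop_of_wedge h hex.choose_spec

lemma ratio_eq {ψ φ : E →L[ℂ] ℂ} (hφ : φ ≠ 0) {c : ℂ} (h : ψ = c • φ) : ratio ψ φ = c := by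
  have hex : ∃ v, φ v ≠ 0 := by
    by_contra hc
    push_neg at hc
    exact hφ (ContinuousLinearMap.ext fun v => by simpa using hc v)
  rw [ratio]
  rw [dif_pos hex, h]
  have := hex.choose_spec
  simp only [ContinuousLinearMap.coe_smul', Pi.smul_apply, smul_eq_mul]
  field_simp

/-- Finitely many nonzero functionals admit a common non-vanishing vector. -/
lemma exists_forall_ne_zero [CompleteSpace E] {m : ℕ} (φ : Fin m → (E →L[ℂ] ℂ))
    (hφ : ∀ i, φ i ≠ 0) : ∃ u, ∀ i, φ i u ≠ 0 := by
  have hopen : ∀ i, IsOpen {u : E | φ i u ≠ 0} := fun i =>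
    isOpen_ne.preimage (φ i).continuous
  have hdense : ∀ i, Dense {u : E | φ i u ≠ 0} := by
    intro i
    rw [Metric.dense_iff]
    intro a r hr
    obtain ⟨w, hw⟩ : ∃ w, φ i w ≠ 0 := by
      by_contra hc
      push_neg at hc
      exact hφ i (ContinuousLinearMap.ext fun v => by simpa using hc v)
    by_cases ha : φ i a ≠ 0
    · exact ⟨a, Metric.mem_ball_self hr, ha⟩
    · push_neg at ha
      have hw0 : w ≠ 0 := fun h => hw (by simp [h])
      set δ : ℂ := ((r / (2 * ‖w‖) : ℝ) : ℂ) with hδdef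
      refine ⟨a + δ • w, ?_, ?_⟩
      · have hδ : ‖δ • w‖ = r / 2 := by
          have : (0:ℝ) < ‖w‖ := norm_pos_iff.mpr hw0
          simp only [norm_smul, δ]
          rw [Complex.norm_real, Real.norm_eq_abs, abs_of_pos (by positivity)]
          field_simp
        simp only [Metric.mem_ball, dist_eq_norm, add_sub_cancel_left, hδ]
        linarith
      · simp only [Set.mem_setOf_eq, map_add, map_smul, ha, zero_add, smul_eq_mul]
        have hδ0 : δ ≠ 0 := by
          have : (0:ℝ) < ‖w‖ := norm_pos_iff.mpr hw0
          simp only [δ, ne_eq, Complex.ofReal_eq_zero]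
          positivity
        exact mul_ne_zero hδ0 hw
  have := dense_iInter_of_isOpen hopen hdense
  obtain ⟨u, hu⟩ := this.nonempty
  exact ⟨u, by simpa using Set.mem_iInter.mp hu⟩

end CDUaux

open Filter Topology in
set_option maxHeartbeats 1000000 in
/-- **Uniqueness of holomorphic closed decompositions with trivial abelian rank.**
Let `U ⊆ ℂⁿ` be connected open, `μ₁,…,μ_m` and `η₁,…,η_m` closed holomorphic 1-forms
on `U` with `μ₁⊙⋯⊙μ_m = η₁⊙⋯⊙η_m`, `ηᵢ ∧ μᵢ ≡ 0`, and the decomposition `μ₁⋯μ_m` of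
trivial abelian rank.  Then `ηᵢ = cᵢ·μᵢ` for nonzero constants `cᵢ` with `∏ cᵢ = 1`. -/
theorem closed_decomposition_unique_up_to_constants
    (n m : ℕ)
    (U : Set (Fin n → ℂ)) (hUopen : IsOpen U) (hUconn : IsConnected U)
    (μ η : Fin m → ((Fin n → ℂ) → (Fin n → ℂ) →L[ℂ] ℂ))
    (hμan : ∀ i, AnalyticOnNhd ℂ (μ i) U)
    (hηan : ∀ i, AnalyticOnNhd ℂ (η i) U)
    (hμcl : ∀ i, ∀ x ∈ U, ∀ u v : Fin n → ℂ,
      fderiv ℂ (μ i) x u v = fderiv ℂ (μ i) x v u)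
    (hηcl : ∀ i, ∀ x ∈ U, ∀ u v : Fin n → ℂ,
      fderiv ℂ (η i) x u v = fderiv ℂ (η i) x v u)
    (hprod : ∀ x ∈ U, ∀ u : Fin m → (Fin n → ℂ),
      ∑ σ : Equiv.Perm (Fin m), ∏ i, μ i x (u (σ i)) =
        ∑ σ : Equiv.Perm (Fin m), ∏ i, η i x (u (σ i)))
    (hwedge : ∀ i, ∀ x ∈ U, ∀ u v : Fin n → ℂ,
      η i x u * μ i x v = η i x v * μ i x u)
    (habelian : ∀ V : Set (Fin n → ℂ), IsOpen V → V.Nonempty → IsConnected V → V ⊆ U →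
      ∀ f : Fin m → ((Fin n → ℂ) → ℂ),
        (∀ i, AnalyticOnNhd ℂ (f i) V) →
        (∀ x ∈ V, ∑ i, f i x • μ i x = (0 : (Fin n → ℂ) →L[ℂ] ℂ)) →
        (∀ i, ∀ x ∈ V, ∀ u v : Fin n → ℂ,
          fderiv ℂ (f i) x u * μ i x v = fderiv ℂ (f i) x v * μ i x u) →
        ∀ i, ∀ x ∈ V, f i x = 0) :
    ∃ c : Fin m → ℂ, (∀ i, c i ≠ 0) ∧ (∏ i, c i = 1) ∧
      ∀ i, ∀ x ∈ U, η i x = c i • μ i x := by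
  classical
  -- Step A: each μ i is somewhere nonzero on every nonempty open subset of U
  have hμne : ∀ (V : Set (Fin n → ℂ)), IsOpen V → V.Nonempty → V ⊆ U →
      ∀ i, ∃ x ∈ V, μ i x ≠ 0 := by
    intro V hVo hVne hVU i
    by_contra hc
    push_neg at hc
    obtain ⟨y, hy⟩ := hVne
    obtain ⟨r, hr, hball⟩ := Metric.isOpen_iff.mp hVo y hy
    have hBne : (Metric.ball y r).Nonempty := ⟨y, Metric.mem_ball_self hr⟩
    have hBconn : IsConnected (Metric.ball y r) :=
      ⟨hBne, (convex_ball y r).isPreconnected⟩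
    have hBU : Metric.ball y r ⊆ U := hball.trans hVU
    have hcon := habelian _ Metric.isOpen_ball hBne hBconn hBU
      (fun j _ => if j = i then (1:ℂ) else 0)
      (fun j => analyticOnNhd_const)
      (fun x hx => by
        have hx0 : μ i x = 0 := hc x (hball hx)
        have hterm : ∀ j : Fin m, (if j = i then (1:ℂ) else 0) • μ j x
            = if j = i then μ j x else 0 := by
          intro j
          split
          · exact one_smul ℂ _
          · exact zero_smul ℂ (μ _ x)
        rw [Finset.sum_congr rfl fun j _ => hterm j,
          Finset.sum_ite_eq' Finset.univ i (fun j => μ j x)]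
        simp [hx0])
      (fun j x hx u v => by simp)
      i y (Metric.mem_ball_self hr)
    simp at hcon
  -- Step B: the open set W where all μ i are nonzero
  set W : Set (Fin n → ℂ) := {x | x ∈ U ∧ ∀ i, μ i x ≠ 0} with hWdef
  have hWU : W ⊆ U := fun x hx => hx.1
  have hWopen : IsOpen W := by
    rw [isOpen_iff_mem_nhds]
    rintro x ⟨hxU, hxi⟩
    have h1 : U ∈ 𝓝 x := hUopen.mem_nhds hxU
    have h2 : ∀ i, ∀ᶠ y in 𝓝 x, μ i y ≠ 0 := fun i =>
      ((hμan i x hxU).continuousAt).eventually_ne (hxi i)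
    filter_upwards [h1, Filter.eventually_all.mpr h2] with y hy1 hy2 using ⟨hy1, hy2⟩
  -- Step C: W is nonempty
  have hNopen : ∀ i, IsOpen {x | x ∈ U ∧ μ i x ≠ 0} := by
    intro i
    rw [isOpen_iff_mem_nhds]
    rintro x ⟨hxU, hxi⟩
    have h1 : U ∈ 𝓝 x := hUopen.mem_nhds hxU
    have h2 : ∀ᶠ y in 𝓝 x, μ i y ≠ 0 := ((hμan i x hxU).continuousAt).eventually_ne hxi
    filter_upwards [h1, h2] with y hy1 hy2 using ⟨hy1, hy2⟩
  have hWmeet : ∃ x ∈ U, ∀ i, μ i x ≠ 0 := by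
    suffices h : ∀ s : Finset (Fin m), ∀ V : Set (Fin n → ℂ), IsOpen V → V.Nonempty → V ⊆ U →
        ∃ x ∈ V, ∀ i ∈ s, μ i x ≠ 0 by
      obtain ⟨x, hxV, hx⟩ := h Finset.univ U hUopen hUconn.nonempty subset_rfl
      exact ⟨x, hxV, fun i => hx i (Finset.mem_univ i)⟩
    intro s
    induction s using Finset.induction_on with
    | empty =>
      intro V hVo hVne hVU
      obtain ⟨y, hy⟩ := hVne
      exact ⟨y, hy, by simp⟩
    | @insert a s ha ih =>
      intro V hVo hVne hVU
      obtain ⟨y, hyV, hyne⟩ := hμne V hVo hVne hVU a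
      have hV'o : IsOpen (V ∩ {x | x ∈ U ∧ μ a x ≠ 0}) := hVo.inter (hNopen a)
      have hV'ne : (V ∩ {x | x ∈ U ∧ μ a x ≠ 0}).Nonempty := ⟨y, hyV, hVU hyV, hyne⟩
      have hV'U : V ∩ {x | x ∈ U ∧ μ a x ≠ 0} ⊆ U := fun x hx => hx.2.1
      obtain ⟨x, hxV', hx⟩ := ih _ hV'o hV'ne hV'U
      refine ⟨x, hxV'.1, fun i hi => ?_⟩
      rcases Finset.mem_insert.mp hi with h | h
      · exact h ▸ hxV'.2.2
      · exact hx i h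
  obtain ⟨x₀, hx₀U, hx₀ne⟩ := hWmeet
  have hx₀W : x₀ ∈ W := ⟨hx₀U, hx₀ne⟩
  -- Step D: the function g with η i = g i • μ i on W
  set g : Fin m → (Fin n → ℂ) → ℂ := fun i x => CDUaux.ratio (η i x) (μ i x) with hgdef
  have hgspec : ∀ x ∈ W, ∀ i, η i x = g i x • μ i x := fun x hx i =>
    CDUaux.ratio_spec (fun u v => hwedge i x hx.1 u v) (hx.2 i)
  have hexv : ∀ i, ∀ x ∈ W, ∃ v, μ i x v ≠ 0 := by
    intro i x hx
    by_contra hc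
    push_neg at hc
    exact hx.2 i (ContinuousLinearMap.ext fun v => by simpa using hc v)
  have hgan : ∀ i, AnalyticOnNhd ℂ (g i) W := by
    intro i x hx
    obtain ⟨v, hv⟩ := hexv i x hx
    have hev : ∀ᶠ y in 𝓝 x, μ i y v ≠ 0 := by
      have hc : ContinuousAt (fun y => μ i y v) x :=
        ((ContinuousLinearMap.apply ℂ ℂ v).continuous.continuousAt).comp
          (hμan i x hx.1).continuousAt
      exact hc.eventually_ne hv
    have han : AnalyticAt ℂ (fun y => η i y v / μ i y v) x :=
      AnalyticAt.div
        (((ContinuousLinearMap.apply ℂ ℂ v).analyticAt _).comp (hηan i x hx.1))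
        (((ContinuousLinearMap.apply ℂ ℂ v).analyticAt _).comp (hμan i x hx.1)) hv
    apply han.congr
    filter_upwards [hev, hWopen.mem_nhds hx] with y hyv hyW
    have h2 : η i y v = g i y * μ i y v := by rw [hgspec y hyW i]; simp
    rw [h2]
    field_simp
  have hμdiff : ∀ i, ∀ x ∈ U, DifferentiableAt ℂ (μ i) x := fun i x hx =>
    (hμan i x hx).differentiableAt
  have hgdiff : ∀ i, ∀ x ∈ W, DifferentiableAt ℂ (g i) x := fun i x hx =>
    (hgan i x hx).differentiableAt
  -- Step E: the product of the g i is 1 on W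
  have hprodg : ∀ x ∈ W, ∏ i, g i x = 1 := by
    intro x hx
    obtain ⟨u₀, hu₀⟩ := CDUaux.exists_forall_ne_zero (fun i => μ i x) hx.2
    have h := hprod x hx.1 (fun _ => u₀)
    have hL : ∑ _σ : Equiv.Perm (Fin m), ∏ i, μ i x u₀ =
        (Nat.factorial m : ℂ) * ∏ i, μ i x u₀ := by
      rw [Finset.sum_const, Finset.card_univ, Fintype.card_perm, Fintype.card_fin, nsmul_eq_mul]
    have hR : ∑ _σ : Equiv.Perm (Fin m), ∏ i, η i x u₀ =
        (Nat.factorial m : ℂ) * ((∏ i, g i x) * ∏ i, μ i x u₀) := by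
      rw [Finset.sum_const, Finset.card_univ, Fintype.card_perm, Fintype.card_fin, nsmul_eq_mul]
      congr 1
      rw [← Finset.prod_mul_distrib]
      exact Finset.prod_congr rfl fun i _ => by rw [hgspec x hx i]; simp
    rw [hL, hR] at h
    have hP : (∏ i, μ i x u₀) ≠ 0 := Finset.prod_ne_zero_iff.mpr fun i _ => hu₀ i
    have hfac : (Nat.factorial m : ℂ) ≠ 0 := Nat.cast_ne_zero.mpr (Nat.factorial_ne_zero m)
    have h2 := mul_left_cancel₀ hfac h
    have h3 : (∏ i, g i x) * ∏ i, μ i x u₀ = 1 * ∏ i, μ i x u₀ := by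
      rw [one_mul]; exact h2.symm
    exact mul_right_cancel₀ hP h3
  have hgne : ∀ x ∈ W, ∀ i, g i x ≠ 0 := by
    intro x hx i
    have h1 : (∏ j, g j x) ≠ 0 := by rw [hprodg x hx]; exact one_ne_zero
    exact Finset.prod_ne_zero_iff.mp h1 i (Finset.mem_univ i)
  -- Step G: dg i ∧ μ i = 0 on W
  have hdgw : ∀ i, ∀ x ∈ W, ∀ u v : Fin n → ℂ,
      fderiv ℂ (g i) x u * μ i x v = fderiv ℂ (g i) x v * μ i x u := by
    intro i x hx u v
    have hEq : (fun y => η i y) =ᶠ[𝓝 x] fun y => g i y • μ i y := by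
      filter_upwards [hWopen.mem_nhds hx] with y hy using hgspec y hy i
    have hfd : fderiv ℂ (η i) x = g i x • fderiv ℂ (μ i) x
        + (fderiv ℂ (g i) x).smulRight (μ i x) := by
      rw [hEq.fderiv_eq, fderiv_fun_smul (hgdiff i x hx) (hμdiff i x hx.1)]
    have h1 := hηcl i x hx.1 u v
    rw [hfd] at h1
    simp only [ContinuousLinearMap.add_apply, ContinuousLinearMap.coe_smul',
      Pi.smul_apply, ContinuousLinearMap.smulRight_apply, smul_eq_mul] at h1
    have h2 := hμcl i x hx.1 u v
    linear_combination h1 - g i x * h2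
  -- Step H: the function hh with dg i = hh i • μ i on W, and f = hh / g
  set hh : Fin m → (Fin n → ℂ) → ℂ := fun i x => CDUaux.ratio (fderiv ℂ (g i) x) (μ i x)
    with hhdef
  have hhspec : ∀ i, ∀ x ∈ W, fderiv ℂ (g i) x = hh i x • μ i x := fun i x hx =>
    CDUaux.ratio_spec (hdgw i x hx) (hx.2 i)
  set f : Fin m → (Fin n → ℂ) → ℂ := fun i x => hh i x / g i x with hfdef
  have hdgan : ∀ i, AnalyticOnNhd ℂ (fderiv ℂ (g i)) W := fun i => (hgan i).fderiv
  have hhan : ∀ i, AnalyticOnNhd ℂ (hh i) W := by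
    intro i x hx
    obtain ⟨v, hv⟩ := hexv i x hx
    have hev : ∀ᶠ y in 𝓝 x, μ i y v ≠ 0 := by
      have hc : ContinuousAt (fun y => μ i y v) x :=
        ((ContinuousLinearMap.apply ℂ ℂ v).continuous.continuousAt).comp
          (hμan i x hx.1).continuousAt
      exact hc.eventually_ne hv
    have han : AnalyticAt ℂ (fun y => fderiv ℂ (g i) y v / μ i y v) x :=
      AnalyticAt.div
        (((ContinuousLinearMap.apply ℂ ℂ v).analyticAt _).comp (hdgan i x hx))
        (((ContinuousLinearMap.apply ℂ ℂ v).analyticAt _).comp (hμan i x hx.1)) hv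
    apply han.congr
    filter_upwards [hev, hWopen.mem_nhds hx] with y hyv hyW
    have h2 : fderiv ℂ (g i) y v = hh i y * μ i y v := by rw [hhspec i y hyW]; simp
    rw [h2]
    field_simp
  have hfan : ∀ i, AnalyticOnNhd ℂ (f i) W := fun i x hx =>
    (hhan i x hx).div (hgan i x hx) (hgne x hx i)
  have hhdiff : ∀ i, ∀ x ∈ W, DifferentiableAt ℂ (hh i) x := fun i x hx =>
    (hhan i x hx).differentiableAt
  have hfdiff : ∀ i, ∀ x ∈ W, DifferentiableAt ℂ (f i) x := fun i x hx =>
    (hfan i x hx).differentiableAt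
  -- Step I: the abelian-relation sum vanishes
  have hsum : ∀ x ∈ W, ∑ i, f i x • μ i x = (0 : (Fin n → ℂ) →L[ℂ] ℂ) := by
    intro x hx
    have hPconst : (fun y => ∏ i, g i y) =ᶠ[𝓝 x] fun _ => (1:ℂ) := by
      filter_upwards [hWopen.mem_nhds hx] with y hy using hprodg y hy
    have hP0 : fderiv ℂ (fun y => ∏ i, g i y) x = 0 := by
      rw [hPconst.fderiv_eq]
      exact fderiv_const_apply 1
    have hPd : fderiv ℂ (fun y => ∏ i, g i y) x
        = ∑ i, (∏ j ∈ Finset.univ.erase i, g j x) • fderiv ℂ (g i) x :=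
      fderiv_finset_prod (fun i _ => hgdiff i x hx)
    have key : ∑ i, (∏ j ∈ Finset.univ.erase i, g j x) • fderiv ℂ (g i) x = 0 := by
      rw [← hPd, hP0]
    calc ∑ i, f i x • μ i x
        = ∑ i, (∏ j ∈ Finset.univ.erase i, g j x) • fderiv ℂ (g i) x := by
          refine Finset.sum_congr rfl fun i _ => ?_
          rw [hhspec i x hx, smul_smul]
          congr 1
          have hpe : (∏ j ∈ Finset.univ.erase i, g j x) * g i x = 1 := by
            rw [Finset.prod_erase_mul _ _ (Finset.mem_univ i)]
            exact hprodg x hx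
          have hinv : (∏ j ∈ Finset.univ.erase i, g j x) = (g i x)⁻¹ :=
            eq_inv_of_mul_eq_one_left hpe
          rw [hinv]
          show hh i x / g i x = (g i x)⁻¹ * hh i x
          rw [div_eq_inv_mul]
      _ = 0 := key
  -- Step J: df i ∧ μ i = 0 on W
  have hdf : ∀ i, ∀ x ∈ W, ∀ u v : Fin n → ℂ,
      fderiv ℂ (f i) x u * μ i x v = fderiv ℂ (f i) x v * μ i x u := by
    intro i x hx u v
    have hsym : ∀ a b : Fin n → ℂ,
        fderiv ℂ (fderiv ℂ (g i)) x a b = fderiv ℂ (fderiv ℂ (g i)) x b a := by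
      intro a b
      refine second_derivative_symmetric_of_eventually (f := g i) (f' := fderiv ℂ (g i)) (x := x)
        (f'' := fderiv ℂ (fderiv ℂ (g i)) x) ?_ ?_ a b
      · filter_upwards [hWopen.mem_nhds hx] with y hy using (hgdiff i y hy).hasFDerivAt
      · exact ((hdgan i) x hx).differentiableAt.hasFDerivAt
    have hEq : (fderiv ℂ (g i)) =ᶠ[𝓝 x] fun y => hh i y • μ i y := by
      filter_upwards [hWopen.mem_nhds hx] with y hy using hhspec i y hy
    have hfd2 : fderiv ℂ (fderiv ℂ (g i)) x = hh i x • fderiv ℂ (μ i) x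
        + (fderiv ℂ (hh i) x).smulRight (μ i x) := by
      rw [hEq.fderiv_eq, fderiv_fun_smul (hhdiff i x hx) (hμdiff i x hx.1)]
    have h1 := hsym u v
    rw [hfd2] at h1
    simp only [ContinuousLinearMap.add_apply, ContinuousLinearMap.coe_smul',
      Pi.smul_apply, ContinuousLinearMap.smulRight_apply, smul_eq_mul] at h1
    have h2 := hμcl i x hx.1 u v
    have hdhh : fderiv ℂ (hh i) x u * μ i x v = fderiv ℂ (hh i) x v * μ i x u := by
      linear_combination h1 - hh i x * h2
    have hEq2 : (hh i) =ᶠ[𝓝 x] fun y => f i y * g i y := by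
      filter_upwards [hWopen.mem_nhds hx] with y hy
      rw [hfdef]
      simp only []
      rw [div_mul_cancel₀ _ (hgne y hy i)]
    have hfd3 : fderiv ℂ (hh i) x = f i x • fderiv ℂ (g i) x + g i x • fderiv ℂ (f i) x := by
      rw [hEq2.fderiv_eq, fderiv_fun_mul (hfdiff i x hx) (hgdiff i x hx)]
    rw [hfd3] at hdhh
    simp only [ContinuousLinearMap.add_apply, ContinuousLinearMap.coe_smul',
      Pi.smul_apply, smul_eq_mul] at hdhh
    have h3 := hdgw i x hx u v
    have h4 : g i x * (fderiv ℂ (f i) x u * μ i x v) =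
        g i x * (fderiv ℂ (f i) x v * μ i x u) := by
      linear_combination hdhh - f i x * h3
    exact mul_left_cancel₀ (hgne x hx i) h4
  -- Step K: the abelian hypothesis forces f = 0 on W
  have hf0 : ∀ x ∈ W, ∀ i, f i x = 0 := by
    intro x hx i
    have hxV : x ∈ connectedComponentIn W x := mem_connectedComponentIn hx
    have hVo : IsOpen (connectedComponentIn W x) := hWopen.connectedComponentIn
    have hVconn : IsConnected (connectedComponentIn W x) :=
      isConnected_connectedComponentIn_iff.mpr hx
    have hVW : connectedComponentIn W x ⊆ W := connectedComponentIn_subset W x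
    exact habelian _ hVo ⟨x, hxV⟩ hVconn (hVW.trans hWU) f
      (fun i => (hfan i).mono hVW)
      (fun y hy => hsum y (hVW hy))
      (fun i y hy u v => hdf i y (hVW hy) u v) i x hxV
  -- Step L: dg = 0 on W, hence g is constant near x₀
  have hdg0 : ∀ i, ∀ x ∈ W, fderiv ℂ (g i) x = 0 := by
    intro i x hx
    rw [hhspec i x hx]
    have hz : hh i x = 0 := by
      have hfz := hf0 x hx i
      rw [hfdef] at hfz
      simp only [] at hfz
      exact (div_eq_zero_iff.mp hfz).resolve_right (hgne x hx i)
    rw [hz]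
    exact zero_smul ℂ (μ i x)
  obtain ⟨r, hr, hball⟩ := Metric.isOpen_iff.mp hWopen x₀ hx₀W
  have hgconst : ∀ i, ∀ y ∈ Metric.ball x₀ r, g i y = g i x₀ := by
    intro i y hy
    have hconv : Convex ℝ (Metric.ball x₀ r) := convex_ball x₀ r
    have hdiff : DifferentiableOn ℂ (g i) (Metric.ball x₀ r) := fun z hz =>
      (hgdiff i z (hball hz)).differentiableWithinAt
    have h0 : ∀ z ∈ Metric.ball x₀ r, fderivWithin ℂ (g i) (Metric.ball x₀ r) z = 0 := by
      intro z hz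
      rw [fderivWithin_of_isOpen Metric.isOpen_ball hz]
      exact hdg0 i z (hball hz)
    exact hconv.is_const_of_fderivWithin_eq_zero hdiff h0 hy (Metric.mem_ball_self hr)
  -- Step M: conclude via the identity theorem
  refine ⟨fun i => g i x₀, fun i => hgne x₀ hx₀W i, hprodg x₀ hx₀W, ?_⟩
  intro i x hx
  have hΦan : AnalyticOnNhd ℂ (fun y => η i y - g i x₀ • μ i y) U := by
    intro z hz
    exact (hηan i z hz).sub (analyticAt_const.fun_smul (hμan i z hz))
  have hzero : (fun y => η i y - g i x₀ • μ i y) =ᶠ[𝓝 x₀] 0 := by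
    filter_upwards [Metric.isOpen_ball.mem_nhds (Metric.mem_ball_self hr)] with y hy
    rw [Pi.zero_apply, hgspec y (hball hy) i, hgconst i y hy, sub_self]
  have hEqOn := hΦan.eqOn_zero_of_preconnected_of_eventuallyEq_zero
    hUconn.isPreconnected hx₀U hzero
  have h2 := hEqOn hx
  rw [Pi.zero_apply, sub_eq_zero] at h2
  exact h2
end

section
/- Let U ⊆ ℂ² be a connected open set and let μ₁, μ₂, η₁, η₂ be closed holomorphic 1-forms on U such that μ₁ ∧ μ₂ is not identically zero on U, η₁ ∧ μ₁ ≡ 0 and η₂ ∧ μ₂ ≡ 0 on U, and μ₁ ⊙ μ₂ = η₁ ⊙ η₂ on U. Then there exists c ∈ ℂ \ {0} such that η₁ = c·μ₁ and η₂ = c⁻¹·μ₂ on U. -/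
open Complex

private lemma span_of_dual_basis (φ ψ : (ℂ × ℂ) →L[ℂ] ℂ) (u v : ℂ × ℂ)
    (h1 : φ u = 1) (h2 : ψ u = 0) (h3 : φ v = 0) (h4 : ψ v = 1) (w : ℂ × ℂ) :
    w = φ w • u + ψ w • v := by
  set T : (ℂ × ℂ) →ₗ[ℂ] ℂ × ℂ := LinearMap.prod φ.toLinearMap ψ.toLinearMap with hT
  have hsurj : Function.Surjective T := by
    rintro ⟨a, b⟩
    refine ⟨a • u + b • v, ?_⟩
    simp [hT, LinearMap.prod_apply, map_add, map_smul, h1, h2, h3, h4, smul_eq_mul,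
      Prod.ext_iff]
  have hinj : Function.Injective T := (LinearMap.injective_iff_surjective).mpr hsurj
  apply hinj
  simp [hT, LinearMap.prod_apply, map_add, map_smul, h1, h2, h3, h4, smul_eq_mul,
    Prod.ext_iff]

set_option maxHeartbeats 2000000 in
/-- **Uniqueness of closed decompositions of a rank-2 symmetric 2-differential.**
Let `U ⊆ ℂ²` be connected open and `μ₁, μ₂, η₁, η₂` closed holomorphic 1-forms on `U`
with `μ₁ ∧ μ₂ ≢ 0`, `η₁ ∧ μ₁ ≡ 0`, `η₂ ∧ μ₂ ≡ 0`, and `μ₁ ⊙ μ₂ = η₁ ⊙ η₂`.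
Then `η₁ = c·μ₁` and `η₂ = c⁻¹·μ₂` for some `c ≠ 0`. -/
theorem closed_decomposition_rank_two_unique
    (U : Set (ℂ × ℂ)) (hUopen : IsOpen U) (hUconn : IsConnected U)
    (μ₁ μ₂ η₁ η₂ : ℂ × ℂ → (ℂ × ℂ) →L[ℂ] ℂ)
    (hμ₁an : AnalyticOnNhd ℂ μ₁ U) (hμ₂an : AnalyticOnNhd ℂ μ₂ U)
    (hη₁an : AnalyticOnNhd ℂ η₁ U) (hη₂an : AnalyticOnNhd ℂ η₂ U)
    (hμ₁cl : ∀ x ∈ U, ∀ u v : ℂ × ℂ, fderiv ℂ μ₁ x u v = fderiv ℂ μ₁ x v u)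
    (hμ₂cl : ∀ x ∈ U, ∀ u v : ℂ × ℂ, fderiv ℂ μ₂ x u v = fderiv ℂ μ₂ x v u)
    (hη₁cl : ∀ x ∈ U, ∀ u v : ℂ × ℂ, fderiv ℂ η₁ x u v = fderiv ℂ η₁ x v u)
    (hη₂cl : ∀ x ∈ U, ∀ u v : ℂ × ℂ, fderiv ℂ η₂ x u v = fderiv ℂ η₂ x v u)
    (hrank : ∃ x ∈ U, ∃ u v : ℂ × ℂ, μ₁ x u * μ₂ x v - μ₁ x v * μ₂ x u ≠ 0)
    (hw₁ : ∀ x ∈ U, ∀ u v : ℂ × ℂ, η₁ x u * μ₁ x v = η₁ x v * μ₁ x u)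
    (hw₂ : ∀ x ∈ U, ∀ u v : ℂ × ℂ, η₂ x u * μ₂ x v = η₂ x v * μ₂ x u)
    (hprod : ∀ x ∈ U, ∀ u v : ℂ × ℂ,
      μ₁ x u * μ₂ x v + μ₁ x v * μ₂ x u = η₁ x u * η₂ x v + η₁ x v * η₂ x u) :
    ∃ c : ℂ, c ≠ 0 ∧ ∀ x ∈ U, η₁ x = c • μ₁ x ∧ η₂ x = c⁻¹ • μ₂ x := by
  obtain ⟨x₀, hx₀U, u₀, v₀, hD0⟩ := hrank
  -- choose vectors where μ₁, μ₂ don't vanish at x₀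
  obtain ⟨a₁, ha₁⟩ : ∃ a, μ₁ x₀ a ≠ 0 := by
    by_contra h; push_neg at h
    exact hD0 (by rw [h u₀, h v₀]; ring)
  obtain ⟨a₂, ha₂⟩ : ∃ a, μ₂ x₀ a ≠ 0 := by
    by_contra h; push_neg at h
    exact hD0 (by rw [h u₀, h v₀]; ring)
  -- a ball around x₀ where everything is nonvanishing
  have hev : ∀ᶠ x in nhds x₀, x ∈ U ∧ μ₁ x a₁ ≠ 0 ∧ μ₂ x a₂ ≠ 0 ∧
      μ₁ x u₀ * μ₂ x v₀ - μ₁ x v₀ * μ₂ x u₀ ≠ 0 := by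
    have c1 : ContinuousAt (fun x => μ₁ x a₁) x₀ :=
      (((ContinuousLinearMap.apply ℂ ℂ a₁).analyticAt _).comp (hμ₁an x₀ hx₀U)).continuousAt
    have c2 : ContinuousAt (fun x => μ₂ x a₂) x₀ :=
      (((ContinuousLinearMap.apply ℂ ℂ a₂).analyticAt _).comp (hμ₂an x₀ hx₀U)).continuousAt
    have c3 : ContinuousAt (fun x => μ₁ x u₀ * μ₂ x v₀ - μ₁ x v₀ * μ₂ x u₀) x₀ := by
      apply ContinuousAt.sub <;> apply ContinuousAt.mul <;>
        first
        | exact (((ContinuousLinearMap.apply ℂ ℂ u₀).analyticAt _).comp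
            (hμ₁an x₀ hx₀U)).continuousAt
        | exact (((ContinuousLinearMap.apply ℂ ℂ v₀).analyticAt _).comp
            (hμ₁an x₀ hx₀U)).continuousAt
        | exact (((ContinuousLinearMap.apply ℂ ℂ u₀).analyticAt _).comp
            (hμ₂an x₀ hx₀U)).continuousAt
        | exact (((ContinuousLinearMap.apply ℂ ℂ v₀).analyticAt _).comp
            (hμ₂an x₀ hx₀U)).continuousAt
    filter_upwards [hUopen.mem_nhds hx₀U, c1.eventually_ne ha₁, c2.eventually_ne ha₂,
      c3.eventually_ne hD0] with x h1 h2 h3 h4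
    exact ⟨h1, h2, h3, h4⟩
  obtain ⟨r, hr0, hball⟩ := Metric.eventually_nhds_iff_ball.mp hev
  set W := Metric.ball x₀ r with hWdef
  have hWopen : IsOpen W := Metric.isOpen_ball
  have hx₀W : x₀ ∈ W := Metric.mem_ball_self hr0
  have hWU : ∀ x ∈ W, x ∈ U := fun x hx => (hball x hx).1
  have hW1 : ∀ x ∈ W, μ₁ x a₁ ≠ 0 := fun x hx => (hball x hx).2.1
  have hW2 : ∀ x ∈ W, μ₂ x a₂ ≠ 0 := fun x hx => (hball x hx).2.2.1
  have hWD : ∀ x ∈ W, μ₁ x u₀ * μ₂ x v₀ - μ₁ x v₀ * μ₂ x u₀ ≠ 0 :=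
    fun x hx => (hball x hx).2.2.2
  -- the proportionality factors
  set f : ℂ × ℂ → ℂ := fun x => η₁ x a₁ / μ₁ x a₁ with hfdef
  set g : ℂ × ℂ → ℂ := fun x => η₂ x a₂ / μ₂ x a₂ with hgdef
  have hfμ : ∀ x ∈ W, ∀ w, η₁ x w = f x * μ₁ x w := by
    intro x hx w
    have h := hw₁ x (hWU x hx) w a₁
    show η₁ x w = η₁ x a₁ / μ₁ x a₁ * μ₁ x w
    rw [div_mul_eq_mul_div, eq_div_iff (hW1 x hx)]
    linear_combination h
  have hgμ : ∀ x ∈ W, ∀ w, η₂ x w = g x * μ₂ x w := by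
    intro x hx w
    have h := hw₂ x (hWU x hx) w a₂
    show η₂ x w = η₂ x a₂ / μ₂ x a₂ * μ₂ x w
    rw [div_mul_eq_mul_div, eq_div_iff (hW2 x hx)]
    linear_combination h
  -- a dual basis at each point of W
  have hbasis : ∀ x ∈ W, ∃ u v : ℂ × ℂ,
      μ₁ x u = 1 ∧ μ₂ x u = 0 ∧ μ₁ x v = 0 ∧ μ₂ x v = 1 ∧
      ∀ w : ℂ × ℂ, w = μ₁ x w • u + μ₂ x w • v := by
    intro x hx
    have hD := hWD x hx
    refine ⟨(μ₁ x u₀ * μ₂ x v₀ - μ₁ x v₀ * μ₂ x u₀)⁻¹ • (μ₂ x v₀ • u₀ - μ₂ x u₀ • v₀),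
      (μ₁ x u₀ * μ₂ x v₀ - μ₁ x v₀ * μ₂ x u₀)⁻¹ • (μ₁ x u₀ • v₀ - μ₁ x v₀ • u₀),
      ?_, ?_, ?_, ?_, ?_⟩
    · simp only [map_smul, map_sub, smul_eq_mul]
      field_simp
      try ring
    · simp only [map_smul, map_sub, smul_eq_mul]
      ring
    · simp only [map_smul, map_sub, smul_eq_mul]
      ring
    · simp only [map_smul, map_sub, smul_eq_mul]
      field_simp
      try ring
    · intro w
      apply span_of_dual_basis (μ₁ x) (μ₂ x)
      · simp only [map_smul, map_sub, smul_eq_mul]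
        field_simp
        try ring
      · simp only [map_smul, map_sub, smul_eq_mul]
        ring
      · simp only [map_smul, map_sub, smul_eq_mul]
        ring
      · simp only [map_smul, map_sub, smul_eq_mul]
        field_simp
        try ring
  -- f * g = 1 on W
  have hfg : ∀ x ∈ W, f x * g x = 1 := by
    intro x hx
    obtain ⟨u, v, h1, h2, h3, h4, -⟩ := hbasis x hx
    have hp := hprod x (hWU x hx) u v
    rw [hfμ x hx u, hfμ x hx v, hgμ x hx u, hgμ x hx v, h1, h2, h3, h4] at hp
    linear_combination -hp
  have hfne : ∀ x ∈ W, f x ≠ 0 := fun x hx => left_ne_zero_of_mul_eq_one (hfg x hx)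
  have hgne : ∀ x ∈ W, g x ≠ 0 := fun x hx => right_ne_zero_of_mul_eq_one (hfg x hx)
  -- differentiability of f and g on W
  have hfan : ∀ x ∈ W, AnalyticAt ℂ f x := by
    intro x hx
    exact (((ContinuousLinearMap.apply ℂ ℂ a₁).analyticAt _).comp
      (hη₁an x (hWU x hx))).div (((ContinuousLinearMap.apply ℂ ℂ a₁).analyticAt _).comp
      (hμ₁an x (hWU x hx))) (hW1 x hx)
  have hgan : ∀ x ∈ W, AnalyticAt ℂ g x := by
    intro x hx
    exact (((ContinuousLinearMap.apply ℂ ℂ a₂).analyticAt _).comp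
      (hη₂an x (hWU x hx))).div (((ContinuousLinearMap.apply ℂ ℂ a₂).analyticAt _).comp
      (hμ₂an x (hWU x hx))) (hW2 x hx)
  have hfdiff : ∀ x ∈ W, DifferentiableAt ℂ f x := fun x hx => (hfan x hx).differentiableAt
  have hgdiff : ∀ x ∈ W, DifferentiableAt ℂ g x := fun x hx => (hgan x hx).differentiableAt
  -- closedness transfers: df ∧ μ₁ = 0
  have hdf₁ : ∀ x ∈ W, ∀ u v : ℂ × ℂ,
      fderiv ℂ f x u * μ₁ x v = fderiv ℂ f x v * μ₁ x u := by
    intro x hx u v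
    have hloc : η₁ =ᶠ[nhds x] fun y => f y • μ₁ y := by
      filter_upwards [hWopen.mem_nhds hx] with y hy
      refine ContinuousLinearMap.ext fun w => ?_
      simp [hfμ y hy w]
    have hd : fderiv ℂ η₁ x = f x • fderiv ℂ μ₁ x + (fderiv ℂ f x).smulRight (μ₁ x) := by
      rw [hloc.fderiv_eq]
      exact fderiv_smul (hfdiff x hx) (hμ₁an x (hWU x hx)).differentiableAt
    have hsym := hη₁cl x (hWU x hx) u v
    rw [hd] at hsym
    simp only [ContinuousLinearMap.add_apply, ContinuousLinearMap.smul_apply,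
      ContinuousLinearMap.smulRight_apply, smul_eq_mul] at hsym
    have hμsym := hμ₁cl x (hWU x hx) u v
    linear_combination hsym - f x * hμsym
  have hdg₂ : ∀ x ∈ W, ∀ u v : ℂ × ℂ,
      fderiv ℂ g x u * μ₂ x v = fderiv ℂ g x v * μ₂ x u := by
    intro x hx u v
    have hloc : η₂ =ᶠ[nhds x] fun y => g y • μ₂ y := by
      filter_upwards [hWopen.mem_nhds hx] with y hy
      refine ContinuousLinearMap.ext fun w => ?_
      simp [hgμ y hy w]
    have hd : fderiv ℂ η₂ x = g x • fderiv ℂ μ₂ x + (fderiv ℂ g x).smulRight (μ₂ x) := by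
      rw [hloc.fderiv_eq]
      exact fderiv_smul (hgdiff x hx) (hμ₂an x (hWU x hx)).differentiableAt
    have hsym := hη₂cl x (hWU x hx) u v
    rw [hd] at hsym
    simp only [ContinuousLinearMap.add_apply, ContinuousLinearMap.smul_apply,
      ContinuousLinearMap.smulRight_apply, smul_eq_mul] at hsym
    have hμsym := hμ₂cl x (hWU x hx) u v
    linear_combination hsym - g x * hμsym
  -- from f*g = 1 : f dg + g df = 0, hence df ∧ μ₂ = 0 as well
  have hdfg : ∀ x ∈ W, ∀ u : ℂ × ℂ,
      f x * fderiv ℂ g x u + g x * fderiv ℂ f x u = 0 := by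
    intro x hx u
    have hloc : (fun y => f y * g y) =ᶠ[nhds x] fun _ => (1 : ℂ) := by
      filter_upwards [hWopen.mem_nhds hx] with y hy
      exact hfg y hy
    have h0 : fderiv ℂ (fun y => f y * g y) x = 0 := by
      rw [hloc.fderiv_eq]; exact fderiv_const_apply 1
    rw [fderiv_fun_mul (hfdiff x hx) (hgdiff x hx)] at h0
    have := congrArg (fun (L : (ℂ × ℂ) →L[ℂ] ℂ) => L u) h0
    simpa [smul_eq_mul] using this
  have hdf₂ : ∀ x ∈ W, ∀ u v : ℂ × ℂ,
      fderiv ℂ f x u * μ₂ x v = fderiv ℂ f x v * μ₂ x u := by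
    intro x hx u v
    have h1 := hdg₂ x hx u v
    have h2 := hdfg x hx u
    have h3 := hdfg x hx v
    have hgx := hgne x hx
    -- g * (df u μ₂ v - df v μ₂ u) = -(f dg u μ₂ v - f dg v μ₂ u) = 0
    have : g x * (fderiv ℂ f x u * μ₂ x v - fderiv ℂ f x v * μ₂ x u) = 0 := by
      linear_combination μ₂ x v * h2 - μ₂ x u * h3 - f x * h1
    rcases mul_eq_zero.mp this with h | h
    · exact absurd h hgx
    · linear_combination h
  -- hence df = 0 on W
  have hdf0 : ∀ x ∈ W, fderiv ℂ f x = 0 := by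
    intro x hx
    obtain ⟨u, v, h1, h2, h3, h4, hspan⟩ := hbasis x hx
    have hv : fderiv ℂ f x v = 0 := by
      have := hdf₁ x hx v u
      rw [h1, h3] at this
      simpa using this
    have hu : fderiv ℂ f x u = 0 := by
      have := hdf₂ x hx u v
      rw [h2, h4] at this
      simpa using this
    refine ContinuousLinearMap.ext fun w => ?_
    show fderiv ℂ f x w = 0
    conv_lhs => rw [hspan w]
    simp [map_add, map_smul, hu, hv]
  -- f is constant on W
  have hconst : ∀ x ∈ W, f x = f x₀ := by
    intro x hx
    have hdiffOn : DifferentiableOn ℂ f W := fun y hy => (hfdiff y hy).differentiableWithinAt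
    have hb : ∀ y ∈ W, ‖fderivWithin ℂ f W y‖ ≤ 0 := by
      intro y hy
      rw [fderivWithin_of_isOpen hWopen hy, hdf0 y hy]
      simp
    have := (convex_ball x₀ r).norm_image_sub_le_of_norm_fderivWithin_le hdiffOn hb hx₀W hx
    rw [zero_mul] at this
    have : f x - f x₀ = 0 := by
      have h := norm_le_zero_iff.mp this
      exact h
    exact sub_eq_zero.mp this
  set c := f x₀ with hcdef
  have hc0 : c ≠ 0 := hfne x₀ hx₀W
  have hgconst : ∀ x ∈ W, g x = c⁻¹ := by
    intro x hx
    have h := hfg x hx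
    rw [hconst x hx] at h
    field_simp
    linear_combination h
  -- identity theorem
  have hF : Set.EqOn (fun x => η₁ x - c • μ₁ x) 0 U := by
    apply AnalyticOnNhd.eqOn_zero_of_preconnected_of_eventuallyEq_zero
      (f := fun x => η₁ x - c • μ₁ x) (fun x hx => (hη₁an x hx).sub ((analyticAt_const (v := c)).smul (hμ₁an x hx)))
      hUconn.isPreconnected hx₀U
    filter_upwards [hWopen.mem_nhds hx₀W] with y hy
    show η₁ y - c • μ₁ y = 0
    rw [sub_eq_zero]
    refine ContinuousLinearMap.ext fun w => ?_
    simp [hfμ y hy w, hconst y hy, smul_eq_mul]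
  have hG : Set.EqOn (fun x => η₂ x - c⁻¹ • μ₂ x) 0 U := by
    apply AnalyticOnNhd.eqOn_zero_of_preconnected_of_eventuallyEq_zero
      (f := fun x => η₂ x - c⁻¹ • μ₂ x) (fun x hx => (hη₂an x hx).sub ((analyticAt_const (v := c⁻¹)).smul (hμ₂an x hx)))
      hUconn.isPreconnected hx₀U
    filter_upwards [hWopen.mem_nhds hx₀W] with y hy
    show η₂ y - c⁻¹ • μ₂ y = 0
    rw [sub_eq_zero]
    refine ContinuousLinearMap.ext fun w => ?_
    simp [hgμ y hy w, hgconst y hy, smul_eq_mul]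
  refine ⟨c, hc0, fun x hx => ⟨?_, ?_⟩⟩
  · have := hF hx
    simpa [sub_eq_zero] using this
  · have := hG hx
    simpa [sub_eq_zero] using this
end
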